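/- arXiv:1710.02042 — 5 statements merged into one kernel-verified Lean document; each statement's English description precedes it below -/
import Mathlib

section
/- Let G ≤ SL(2,ℝ) be a non-uniform lattice. Then for every real number α, L_G(α) = 2·height_G(γ(∞,α)), where γ(∞,α) is the vertical hyperbolic geodesic of ℍ with endpoints ∞ and α. -/
open scoped ENNReal
open MeasureTheory

noncomputable section

/-- `SL(2,ℝ)`. -/
abbrev SL2R := Matrix.SpecialLinearGroup (Fin 2) ℝ

/-- The entry in position (1,1) of a matrix in `SL(2,ℝ)`. -/
def entryA (g : SL2R) : ℝ := g.1 0 0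

/-- The entry in position (1,2) of a matrix in `SL(2,ℝ)`. -/
def entryB (g : SL2R) : ℝ := g.1 0 1

/-- The entry in position (2,1) of a matrix in `SL(2,ℝ)`. -/
def entryC (g : SL2R) : ℝ := g.1 1 0

/-- The entry in position (2,2) of a matrix in `SL(2,ℝ)`. -/
def entryD (g : SL2R) : ℝ := g.1 1 1

/-- The Möbius action of `g ∈ SL(2,ℝ)` on the complex plane (well defined on the
upper half-plane): `z ↦ (az+b)/(cz+d)`. -/
def moeb (g : SL2R) (z : ℂ) : ℂ :=
  ((entryA g : ℂ) * z + (entryB g : ℂ)) / ((entryC g : ℂ) * z + (entryD g : ℂ))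

/-- The upper half-plane `ℍ = {z : 0 < Im z}`, as a subset of `ℂ`. -/
def UHP : Set ℂ := {z : ℂ | 0 < z.im}

/-- Hyperbolic area of a subset of the upper half-plane: `∫∫ dx dy / y²`. -/
def hypArea (s : Set ℂ) : ℝ≥0∞ := ∫⁻ z in s, ENNReal.ofReal (1 / z.im ^ 2)

/-- A subgroup of `SL(2,ℝ)` is discrete if each of its elements is isolated
(in the topology of coefficientwise convergence). -/
def IsDiscreteSubgroup (G : Subgroup SL2R) : Prop :=
  ∀ g ∈ G, ∃ ε > (0 : ℝ), ∀ h ∈ G, (∀ i j, |h.1 i j - g.1 i j| < ε) → h = g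

/-- `F` is a (measurable) fundamental domain for the action of `G` on the upper
half-plane: the `G`-translates of `F` cover `ℍ`, and for every `g ∈ G` acting
nontrivially, `F` and `g·F` overlap in hyperbolic area zero. -/
def IsFundDom (G : Subgroup SL2R) (F : Set ℂ) : Prop :=
  F ⊆ UHP ∧ MeasurableSet F ∧
    (∀ z ∈ UHP, ∃ g ∈ G, moeb g z ∈ F) ∧
    (∀ g ∈ G, (∃ z ∈ UHP, moeb g z ≠ z) → hypArea (F ∩ (moeb g '' F)) = 0)

/-- `G ≤ SL(2,ℝ)` is a non-uniform lattice: it is discrete, it admits a fundamental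
domain of finite hyperbolic area, and the quotient `G\ℍ` is not compact (no compact
subset of `ℍ` meets every orbit). -/
def IsNonUniformLattice (G : Subgroup SL2R) : Prop :=
  IsDiscreteSubgroup G ∧
    (∃ F : Set ℂ, IsFundDom G F ∧ hypArea F < ⊤) ∧
    ¬ ∃ K : Set ℂ, IsCompact K ∧ K ⊆ UHP ∧ ∀ z ∈ UHP, ∃ g ∈ G, moeb g z ∈ K

/-- `∞` is a cusp of `G`: `G` contains a parabolic element `[[1,μ],[0,1]]` with `μ ≠ 0`. -/
def HasCuspAtInfty (G : Subgroup SL2R) : Prop :=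
  ∃ μ : ℝ, μ ≠ 0 ∧ ∃ p : SL2R, p.1 = !![1, μ; 0, 1] ∧ p ∈ G

/-- The set of `k > 0` such that there are infinitely many `g ∈ G`, with pairwise
distinct values `g·∞ = a(g)/c(g) ∈ ℝ`, with `|α − g·∞| < 1/(k c(g)²)`. -/
def LagrangeSet (G : Subgroup SL2R) (α : ℝ) : Set ℝ :=
  {k : ℝ | 0 < k ∧
    {v : ℝ | ∃ g ∈ G, entryC g ≠ 0 ∧ v = entryA g / entryC g ∧
      |α - v| < 1 / (k * entryC g ^ 2)}.Infinite}

/-- The Lagrange value `L_G(α) ∈ [0,∞]` (with the convention `sup ∅ = 0`). -/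
def LagrangeValue (G : Subgroup SL2R) (α : ℝ) : ℝ≥0∞ :=
  sSup (ENNReal.ofReal '' LagrangeSet G α)

/-- The Lagrange spectrum of `G` at `∞`. -/
def LagrangeSpectrum (G : Subgroup SL2R) : Set ℝ≥0∞ :=
  {L : ℝ≥0∞ | ∃ α : ℝ, LagrangeValue G α = L}

/-- The boundary `ℝ ∪ {∞}` of the upper half-plane, with `none` playing the role of `∞`,
and the Möbius action of `SL(2,ℝ)` on it. -/
def bdAct (g : SL2R) (p : Option ℝ) : Option ℝ :=
  match p with
  | none => if entryC g = 0 then none else some (entryA g / entryC g)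
  | some x =>
      if entryC g * x + entryD g = 0 then none
      else some ((entryA g * x + entryB g) / (entryC g * x + entryD g))

/-- The naive height of the hyperbolic geodesic `γ(x,y)` with endpoints `x, y` on the
boundary `ℝ ∪ {∞}`: it is `|x−y|/2` if both endpoints are real, and `+∞` otherwise. -/
def naiveHeight (x y : Option ℝ) : ℝ≥0∞ :=
  match x, y with
  | some u, some v => ENNReal.ofReal (|u - v| / 2)
  | _, _ => ⊤

/-- `g` and `h` are equivalent modulo infinity: `g = k h` for some `k ∈ G` fixing `∞`. -/
def EquivModInf (G : Subgroup SL2R) (g h : SL2R) : Prop :=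
  ∃ k ∈ G, entryC k = 0 ∧ g = k * h

/-- The set of `k > 0` such that `height(g(γ(x,y))) ≥ k` for infinitely many pairwise
inequivalent (modulo infinity) elements `g ∈ G`. -/
def essHeightSet (G : Subgroup SL2R) (x y : Option ℝ) : Set ℝ :=
  {k : ℝ | 0 < k ∧ ∃ S : Set SL2R, S.Infinite ∧
    (∀ g ∈ S, g ∈ G ∧ ENNReal.ofReal k ≤ naiveHeight (bdAct g x) (bdAct g y)) ∧
    S.Pairwise fun g h => ¬ EquivModInf G g h}

/-- The essential height `height_G(γ(x,y)) ∈ [0,∞]` of the geodesic with boundary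
endpoints `x, y ∈ ℝ ∪ {∞}` (with the convention `sup ∅ = 0`). -/
def essHeight (G : Subgroup SL2R) (x y : Option ℝ) : ℝ≥0∞ :=
  sSup (ENNReal.ofReal '' essHeightSet G x y)

lemma SL2_det (g : SL2R) : entryA g * entryD g - entryB g * entryC g = 1 := by
  have h := g.2
  rw [Matrix.det_fin_two] at h
  simpa [entryA, entryB, entryC, entryD] using h

lemma entryA_inv (g : SL2R) : entryA g⁻¹ = entryD g := by
  rw [entryA, Matrix.SpecialLinearGroup.SL2_inv_expl]; rfl

lemma entryB_inv (g : SL2R) : entryB g⁻¹ = -entryB g := by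
  rw [entryB, Matrix.SpecialLinearGroup.SL2_inv_expl]; rfl

lemma entryC_inv (g : SL2R) : entryC g⁻¹ = -entryC g := by
  rw [entryC, Matrix.SpecialLinearGroup.SL2_inv_expl]; rfl

lemma entryD_inv (g : SL2R) : entryD g⁻¹ = entryA g := by
  rw [entryD, Matrix.SpecialLinearGroup.SL2_inv_expl]; rfl

lemma entryC_mul (g h : SL2R) : entryC (g * h) = entryC g * entryA h + entryD g * entryC h := by
  simp [entryC, entryA, entryD, Matrix.mul_apply, Fin.sum_univ_two]

lemma entryD_mul (g h : SL2R) : entryD (g * h) = entryC g * entryB h + entryD g * entryD h := by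
  simp [entryC, entryB, entryD, Matrix.mul_apply, Fin.sum_univ_two]

lemma entryA_mul (g h : SL2R) : entryA (g * h) = entryA g * entryA h + entryB g * entryC h := by
  simp [entryC, entryA, entryB, Matrix.mul_apply, Fin.sum_univ_two]

def crossC (g h : SL2R) : ℝ := entryC g * entryD h - entryD g * entryC h

lemma equiv_iff_cross {G : Subgroup SL2R} {g h : SL2R} (hg : g ∈ G) (hh : h ∈ G) :
    EquivModInf G g h ↔ crossC g h = 0 := by
  constructor
  · rintro ⟨m, hm, hc0, rfl⟩
    simp only [crossC, entryC_mul, entryD_mul, hc0]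
    ring
  · intro h0
    refine ⟨g * h⁻¹, G.mul_mem hg (G.inv_mem hh), ?_, by group⟩
    rw [entryC_mul, entryA_inv, entryC_inv]
    unfold crossC at h0
    linarith

lemma height_val (g : SL2R) (α : ℝ) (hc : entryC g ≠ 0)
    (hy : entryC g * α + entryD g ≠ 0) :
    naiveHeight (bdAct g none) (bdAct g (some α)) =
      ENNReal.ofReal (1 / (2 * |entryC g * (entryC g * α + entryD g)|)) := by
  have key : entryA g / entryC g - (entryA g * α + entryB g) / (entryC g * α + entryD g)
      = 1 / (entryC g * (entryC g * α + entryD g)) := by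
    have hd := SL2_det g
    field_simp
    nlinarith [hd]
  simp only [bdAct, if_neg hc, if_neg hy, naiveHeight, key]
  congr 1
  rw [abs_div, abs_one]
  ring

lemma cross_inv_eq_zero_iff {g h : SL2R} (hg : entryC g ≠ 0) (hh : entryC h ≠ 0) :
    crossC g⁻¹ h⁻¹ = 0 ↔ entryA g / entryC g = entryA h / entryC h := by
  rw [div_eq_div_iff hg hh]
  unfold crossC
  rw [entryC_inv, entryC_inv, entryD_inv, entryD_inv]
  constructor <;> intro h0 <;> linarith

lemma lag_to_ess (G : Subgroup SL2R) (α k : ℝ) (hk : k ∈ LagrangeSet G α) :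
    k / 2 ∈ essHeightSet G none (some α) := by
  classical
  obtain ⟨hk0, hV⟩ := hk
  set V := {v : ℝ | ∃ g ∈ G, entryC g ≠ 0 ∧ v = entryA g / entryC g ∧
      |α - v| < 1 / (k * entryC g ^ 2)} with hVdef
  have hwit : ∀ v ∈ V, ∃ g : SL2R, g ∈ G ∧ entryC g ≠ 0 ∧ v = entryA g / entryC g ∧
      |α - v| < 1 / (k * entryC g ^ 2) := by
    intro v hv
    obtain ⟨g, hg, h⟩ := hv
    exact ⟨g, hg, h⟩
  choose! w hw1 hw2 hw3 hw4 using hwit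
  have hA : ∀ v ∈ V, entryA (w v) = v * entryC (w v) := by
    intro v hv
    have h3 := hw3 v hv
    have h2 := hw2 v hv
    field_simp [h2] at h3
    linarith
  have hinj : Set.InjOn (fun v => (w v)⁻¹) V := by
    intro v hv v' hv' he
    have hww : w v = w v' := by
      have := congrArg (·⁻¹) he
      simpa using this
    rw [hw3 v hv, hw3 v' hv', hww]
  refine ⟨by positivity, (fun v => (w v)⁻¹) '' V, hV.image hinj, ?_, ?_⟩
  · rintro u ⟨v, hv, rfl⟩
    refine ⟨G.inv_mem (hw1 v hv), ?_⟩
    have hc0 : entryC (w v) ≠ 0 := hw2 v hv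
    have hc : entryC (w v)⁻¹ ≠ 0 := by
      rw [entryC_inv]; exact neg_ne_zero.2 hc0
    by_cases hy : entryC (w v)⁻¹ * α + entryD (w v)⁻¹ = 0
    · have ht : naiveHeight (bdAct (w v)⁻¹ none) (bdAct (w v)⁻¹ (some α)) = ⊤ := by
        rw [bdAct, bdAct, if_neg hc, if_pos hy]
        rfl
      rw [ht]; exact le_top
    · rw [height_val _ _ hc hy]
      apply ENNReal.ofReal_le_ofReal
      have hXeq : entryC (w v)⁻¹ * (entryC (w v)⁻¹ * α + entryD (w v)⁻¹)
          = entryC (w v) ^ 2 * (α - v) := by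
        rw [entryC_inv, entryD_inv, hA v hv]
        ring
      have hvne : α - v ≠ 0 := by
        intro h0
        apply hy
        have h1 : entryC (w v)⁻¹ * (entryC (w v)⁻¹ * α + entryD (w v)⁻¹) = 0 := by
          rw [hXeq, h0]; ring
        rcases mul_eq_zero.1 h1 with h2 | h2
        · exact absurd h2 hc
        · exact h2
      have habs : |entryC (w v)⁻¹ * (entryC (w v)⁻¹ * α + entryD (w v)⁻¹)| < 1 / k := by
        rw [hXeq, abs_mul, abs_of_nonneg (by positivity : (0:ℝ) ≤ entryC (w v) ^ 2)]
        calc entryC (w v) ^ 2 * |α - v| < entryC (w v) ^ 2 * (1 / (k * entryC (w v) ^ 2)) := by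
              exact mul_lt_mul_of_pos_left (hw4 v hv) (by positivity)
          _ = 1 / k := by field_simp
      have hpos : 0 < |entryC (w v)⁻¹ * (entryC (w v)⁻¹ * α + entryD (w v)⁻¹)| := by
        rw [hXeq]
        have : entryC (w v) ^ 2 * (α - v) ≠ 0 :=
          mul_ne_zero (pow_ne_zero 2 hc0) hvne
        exact abs_pos.2 this
      have hk1 : k * (1 / k) = 1 := by field_simp
      have hmul := mul_lt_mul_of_pos_left habs hk0
      rw [div_le_div_iff₀ (by norm_num : (0:ℝ) < 2) (by positivity)]
      nlinarith
  · rintro u ⟨v, hv, rfl⟩ u' ⟨v', hv', rfl⟩ hne heq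
    apply hne
    have hvv' : v = v' := by
      have hcz := (equiv_iff_cross (G.inv_mem (hw1 v hv)) (G.inv_mem (hw1 v' hv'))).1 heq
      have heqd := (cross_inv_eq_zero_iff (hw2 v hv) (hw2 v' hv')).1 hcz
      rw [hw3 v hv, hw3 v' hv', heqd]
    rw [hvv']

lemma ess_to_lag (G : Subgroup SL2R) (α k k' : ℝ) (hk : k ∈ essHeightSet G none (some α))
    (hk'0 : 0 < k') (hk' : k' < 2 * k) : k' ∈ LagrangeSet G α := by
  obtain ⟨hk0, S, hSinf, hmem, hpair⟩ := hk
  have h1 : {g | g ∈ S ∧ entryC g = 0}.Subsingleton := by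
    intro g hg h hh
    by_contra hne
    refine hpair hg.1 hh.1 hne ?_
    refine (equiv_iff_cross (hmem g hg.1).1 (hmem h hh.1).1).2 ?_
    unfold crossC
    rw [hg.2, hh.2]; ring
  have h2 : {g | g ∈ S ∧ entryC g * α + entryD g = 0}.Subsingleton := by
    intro g hg h hh
    by_contra hne
    refine hpair hg.1 hh.1 hne ?_
    refine (equiv_iff_cross (hmem g hg.1).1 (hmem h hh.1).1).2 ?_
    have e1 := hg.2
    have e2 := hh.2
    unfold crossC
    linear_combination entryC g * e2 - entryC h * e1
  set S' := {g | g ∈ S ∧ entryC g ≠ 0 ∧ entryC g * α + entryD g ≠ 0} with hS'def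
  have hS'inf : S'.Infinite := by
    have hsub : S \ ({g | g ∈ S ∧ entryC g = 0} ∪ {g | g ∈ S ∧ entryC g * α + entryD g = 0})
        ⊆ S' := by
      rintro g ⟨hgS, hgn⟩
      refine ⟨hgS, ?_, ?_⟩
      · intro h0; exact hgn (Or.inl ⟨hgS, h0⟩)
      · intro h0; exact hgn (Or.inr ⟨hgS, h0⟩)
    exact ((hSinf.diff (h1.finite.union h2.finite))).mono hsub
  refine ⟨hk'0, ?_⟩
  have hφinj : Set.InjOn (fun g => entryA g⁻¹ / entryC g⁻¹) S' := by
    intro g hg h hh he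
    by_contra hne
    refine hpair hg.1 hh.1 hne ?_
    refine (equiv_iff_cross (hmem g hg.1).1 (hmem h hh.1).1).2 ?_
    simp only [entryA_inv, entryC_inv] at he
    rw [div_eq_div_iff (neg_ne_zero.2 hg.2.1) (neg_ne_zero.2 hh.2.1)] at he
    unfold crossC
    linarith
  have hsub2 : (fun g => entryA g⁻¹ / entryC g⁻¹) '' S' ⊆
      {v | ∃ g ∈ G, entryC g ≠ 0 ∧ v = entryA g / entryC g ∧
        |α - v| < 1 / (k' * entryC g ^ 2)} := by
    rintro v ⟨g, hg, rfl⟩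
    obtain ⟨hgS, hgc, hgy⟩ := hg
    have hgG := (hmem g hgS).1
    have hcinv : entryC g⁻¹ ≠ 0 := by rw [entryC_inv]; exact neg_ne_zero.2 hgc
    refine ⟨g⁻¹, G.inv_mem hgG, hcinv, rfl, ?_⟩
    have hht := (hmem g hgS).2
    rw [height_val g α hgc hgy] at hht
    have hle : k ≤ 1 / (2 * |entryC g * (entryC g * α + entryD g)|) :=
      (ENNReal.ofReal_le_ofReal_iff (by positivity)).1 hht
    have hXpos : 0 < |entryC g * (entryC g * α + entryD g)| :=
      abs_pos.2 (mul_ne_zero hgc hgy)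
    have h2k : 2 * k * |entryC g * (entryC g * α + entryD g)| ≤ 1 := by
      rw [le_div_iff₀ (by positivity)] at hle
      linarith
    have hk'X : k' * |entryC g * (entryC g * α + entryD g)| < 1 := by
      nlinarith
    have hveq : α - entryA g⁻¹ / entryC g⁻¹ = (entryC g * α + entryD g) / entryC g := by
      rw [entryA_inv, entryC_inv, div_neg, sub_neg_eq_add]
      field_simp
    rw [abs_mul] at hk'X
    rw [hveq, abs_div, entryC_inv, neg_sq, ← sq_abs]
    rw [div_lt_div_iff₀ (abs_pos.2 hgc) (by positivity)]
    nlinarith [mul_lt_mul_of_pos_left hk'X (abs_pos.2 hgc), abs_pos.2 hgc,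
      abs_nonneg (entryC g * α + entryD g)]
  exact (hS'inf.image hφinj).mono hsub2

/-- The Lagrange value of `α` equals twice the essential height of the vertical
geodesic `γ(∞,α)`. -/
theorem lagrange_eq_twice_essential_height (G : Subgroup SL2R)
    (hG : IsNonUniformLattice G) (α : ℝ) :
    LagrangeValue G α = 2 * essHeight G none (some α) := by
  apply le_antisymm
  · apply sSup_le
    rintro x ⟨k, hk, rfl⟩
    have h2 : ENNReal.ofReal (k / 2) ≤ essHeight G none (some α) :=
      le_sSup ⟨k / 2, lag_to_ess G α k hk, rfl⟩
    calc ENNReal.ofReal k = 2 * ENNReal.ofReal (k / 2) := by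
          rw [show k = 2 * (k / 2) by ring, ENNReal.ofReal_mul (by norm_num)]
          norm_num
      _ ≤ 2 * essHeight G none (some α) := mul_le_mul_right h2 2
  · rw [essHeight, ENNReal.mul_sSup]
    apply iSup₂_le
    rintro x ⟨k, hk, rfl⟩
    have h2 : (2 : ℝ≥0∞) * ENNReal.ofReal k = ENNReal.ofReal (2 * k) := by
      rw [ENNReal.ofReal_mul (by norm_num)]
      norm_num
    rw [h2]
    apply le_of_forall_lt
    intro c hc
    have hct : c ≠ ⊤ := hc.ne_top
    have hctr : c.toReal < 2 * k := (ENNReal.lt_ofReal_iff_toReal_lt hct).1 hc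
    have hk0 := hk.1
    set k₁ := (c.toReal + 2 * k) / 2 with hk₁def
    have hk₁0 : 0 < k₁ := by
      have := ENNReal.toReal_nonneg (a := c)
      rw [hk₁def]; linarith
    have hk₁lt : k₁ < 2 * k := by rw [hk₁def]; linarith
    have hmem : k₁ ∈ LagrangeSet G α := ess_to_lag G α k k₁ hk hk₁0 hk₁lt
    calc c < ENNReal.ofReal k₁ := by
          rw [ENNReal.lt_ofReal_iff_toReal_lt hct, hk₁def]
          linarith
      _ ≤ LagrangeValue G α := le_sSup ⟨k₁, hmem, rfl⟩
end
end

section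
/- (Stable Hall Theorem) Fix ε > 0. Let 𝕂 and 𝔽 be Cantor sets in ℝ, each satisfying the ε-stable gap condition, and assume the pair (𝕂,𝔽) satisfies the ε-size condition. Let U ⊆ ℝ² be an open set containing the rectangle [min 𝕂, max 𝕂] × [min 𝔽, max 𝔽], and let S : U → ℝ be a function such that S − S₀ is Lipschitz on U with (1 − Lip(S−S₀))/(1 + Lip(S−S₀)) > 1 − ε. Then S(𝕂 × 𝔽) = S([min 𝕂, max 𝕂] × [min 𝔽, max 𝔽]) (equality of images). -/
noncomputable section

/-- A Cantor set in `ℝ`: a nonempty compact, perfect, totally disconnected subset. -/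
def IsCantorSet (C : Set ℝ) : Prop :=
  C.Nonempty ∧ IsCompact C ∧ Perfect C ∧ IsTotallyDisconnected C

/-- A slow subdivision of a set `C ⊆ ℝ`: a decreasing family of closed sets `level n`,
each the union of `n+1` disjoint compact intervals, starting from
`level 0 = [min C, max C]`, where `level (n+1)` is obtained from `level n` by removing
exactly one nonempty open interval `(e n, f n)` from the connected component
`[a n, b n]` of `level n`, leaving the two disjoint nonempty closed intervals
`[a n, e n]` and `[f n, b n]`; the total intersection is `C`. -/
structure SlowSubdivision (C : Set ℝ) where
  level : ℕ → Set ℝ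
  subset_succ : ∀ n, level (n + 1) ⊆ level n
  level_zero : level 0 = Set.Icc (sInf C) (sSup C)
  pieces : ∀ n, ∃ I : Fin (n + 1) → ℝ × ℝ,
    (∀ i, (I i).1 ≤ (I i).2) ∧
    (∀ i j, i ≠ j → Disjoint (Set.Icc (I i).1 (I i).2) (Set.Icc (I j).1 (I j).2)) ∧
    level n = ⋃ i, Set.Icc (I i).1 (I i).2
  a : ℕ → ℝ
  e : ℕ → ℝ
  f : ℕ → ℝ
  b : ℕ → ℝ
  a_le_e : ∀ n, a n ≤ e n
  e_lt_f : ∀ n, e n < f n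
  f_le_b : ∀ n, f n ≤ b n
  component : ∀ n, connectedComponentIn (level n) (a n) = Set.Icc (a n) (b n)
  level_succ : ∀ n, level (n + 1) = level n \ Set.Ioo (e n) (f n)
  iInter_level : ⋂ n, level n = C

/-- The `ε`-stable gap condition for a slow subdivision: at every stage, the removed
hole `B = (e n, f n)` and the adjacent intervals `K^L = [a n, e n]`, `K^R = [f n, b n]`
satisfy `|B| < (1−ε)|K^L|` and `|B| < (1−ε)|K^R|`. -/
def StableGapCond (ε : ℝ) {C : Set ℝ} (s : SlowSubdivision C) : Prop :=
  ∀ n, s.f n - s.e n < (1 - ε) * (s.e n - s.a n) ∧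
    s.f n - s.e n < (1 - ε) * (s.b n - s.f n)

/-- A Cantor set satisfies the `ε`-stable gap condition if it admits a slow subdivision
satisfying it. -/
def HasStableGap (ε : ℝ) (C : Set ℝ) : Prop :=
  ∃ s : SlowSubdivision C, StableGapCond ε s

/-- `B` is a hole of `C`: a (bounded) connected component of the complement of `C`
contained in `[min C, max C]`. -/
def IsHole (C B : Set ℝ) : Prop :=
  (∃ x ∈ B, connectedComponentIn Cᶜ x = B) ∧ B ⊆ Set.Icc (sInf C) (sSup C)

/-- The pair `(K, F)` satisfies the `ε`-size condition: every hole of each set has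
length at most `(1−ε)` times the length of the other set. -/
def SizeCond (ε : ℝ) (K F : Set ℝ) : Prop :=
  (∀ B, IsHole K B → sSup B - sInf B ≤ (1 - ε) * (sSup F - sInf F)) ∧
  (∀ B, IsHole F B → sSup B - sInf B ≤ (1 - ε) * (sSup K - sInf K))

section StableHallProof

namespace SHAux

open Set

variable {C : Set ℝ} {ε : ℝ}

lemma level_anti (s : SlowSubdivision C) {m n : ℕ} (h : m ≤ n) : s.level n ⊆ s.level m := by
  induction n, h using Nat.le_induction with
  | base => exact subset_rfl
  | succ n hmn ih => exact (s.subset_succ n).trans ih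

lemma Icc_ab_subset (s : SlowSubdivision C) (n : ℕ) : Icc (s.a n) (s.b n) ⊆ s.level n := by
  rw [← s.component n]; exact connectedComponentIn_subset _ _

lemma gap_subset (s : SlowSubdivision C) (n : ℕ) : Ioo (s.e n) (s.f n) ⊆ s.level n :=
  fun x hx => Icc_ab_subset s n ⟨(s.a_le_e n).trans hx.1.le, hx.2.le.trans (s.f_le_b n)⟩

lemma gap_disj_level (s : SlowSubdivision C) {n m : ℕ} (h : n < m) {x : ℝ}
    (hx : x ∈ s.level m) : x ∉ Ioo (s.e n) (s.f n) := by
  have h1 : x ∈ s.level (n+1) := level_anti s h hx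
  rw [s.level_succ n] at h1
  exact h1.2

lemma e_mem_level_self (s : SlowSubdivision C) (n : ℕ) : s.e n ∈ s.level n :=
  Icc_ab_subset s n ⟨s.a_le_e n, (s.e_lt_f n).le.trans (s.f_le_b n)⟩

lemma f_mem_level_self (s : SlowSubdivision C) (n : ℕ) : s.f n ∈ s.level n :=
  Icc_ab_subset s n ⟨(s.a_le_e n).trans (s.e_lt_f n).le, s.f_le_b n⟩

lemma e_mem_level (s : SlowSubdivision C) (n : ℕ) : ∀ m, s.e n ∈ s.level m := by
  intro m
  induction m with
  | zero => exact level_anti s (Nat.zero_le n) (e_mem_level_self s n)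
  | succ k ih =>
    rcases le_or_gt (k+1) n with h | h
    · exact level_anti s h (e_mem_level_self s n)
    · rw [s.level_succ k]
      refine ⟨ih, ?_⟩
      intro hek
      have hkn : n ≤ k := Nat.lt_succ_iff.mp h
      rcases eq_or_lt_of_le hkn with rfl | hnk
      · exact lt_irrefl _ hek.1
      · set z := (s.e n + min (s.f n) (s.f k)) / 2 with hzdef
        have hmin : s.e n < min (s.f n) (s.f k) := lt_min (s.e_lt_f n) hek.2
        have hz1 : s.e n < z := by
          have := min_le_left (s.f n) (s.f k); simp only [hzdef]; linarith
        have hz2 : z < s.f n := by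
          have := min_le_left (s.f n) (s.f k); simp only [hzdef]; linarith [s.e_lt_f n]
        have hz3 : z < s.f k := by
          have := min_le_right (s.f n) (s.f k); simp only [hzdef]; linarith [hek.2]
        have hz4 : s.e k < z := lt_trans hek.1 hz1
        have hmem : z ∈ s.level (n+1) := level_anti s hnk (gap_subset s k ⟨hz4, hz3⟩)
        rw [s.level_succ n] at hmem
        exact hmem.2 ⟨hz1, hz2⟩

lemma f_mem_level (s : SlowSubdivision C) (n : ℕ) : ∀ m, s.f n ∈ s.level m := by
  intro m
  induction m with
  | zero => exact level_anti s (Nat.zero_le n) (f_mem_level_self s n)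
  | succ k ih =>
    rcases le_or_gt (k+1) n with h | h
    · exact level_anti s h (f_mem_level_self s n)
    · rw [s.level_succ k]
      refine ⟨ih, ?_⟩
      intro hfk
      have hkn : n ≤ k := Nat.lt_succ_iff.mp h
      rcases eq_or_lt_of_le hkn with rfl | hnk
      · exact lt_irrefl _ hfk.2
      · set z := (max (s.e n) (s.e k) + s.f n) / 2 with hzdef
        have hmax : max (s.e n) (s.e k) < s.f n := max_lt (s.e_lt_f n) hfk.1
        have hz1 : z < s.f n := by
          simp only [hzdef]; linarith
        have hz2 : s.e n < z := by
          have := le_max_left (s.e n) (s.e k); simp only [hzdef]; linarith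
        have hz3 : s.e k < z := by
          have := le_max_right (s.e n) (s.e k); simp only [hzdef]; linarith
        have hz4 : z < s.f k := lt_trans hz1 hfk.2
        have hmem : z ∈ s.level (n+1) := level_anti s hnk (gap_subset s k ⟨hz3, hz4⟩)
        rw [s.level_succ n] at hmem
        exact hmem.2 ⟨hz2, hz1⟩

lemma e_mem (s : SlowSubdivision C) (n : ℕ) : s.e n ∈ C :=
  (Set.ext_iff.mp s.iInter_level _).mp (mem_iInter.2 (e_mem_level s n))

lemma f_mem (s : SlowSubdivision C) (n : ℕ) : s.f n ∈ C :=
  (Set.ext_iff.mp s.iInter_level _).mp (mem_iInter.2 (f_mem_level s n))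

lemma C_subset_level (s : SlowSubdivision C) (n : ℕ) : C ⊆ s.level n := by
  intro x hx
  exact mem_iInter.1 ((Set.ext_iff.mp s.iInter_level x).mpr hx) n

lemma gap_disj_C (s : SlowSubdivision C) (n : ℕ) {x : ℝ} (hx : x ∈ C) :
    x ∉ Ioo (s.e n) (s.f n) :=
  gap_disj_level s (Nat.lt_succ_self n) (C_subset_level s (n+1) hx)

lemma one_sub_eps_pos (s : SlowSubdivision C) (hgap : StableGapCond ε s) : 0 < 1 - ε := by
  by_contra hc
  push_neg at hc
  have h1 := (hgap 0).1
  have h2 : 0 < s.f 0 - s.e 0 := sub_pos.2 (s.e_lt_f 0)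
  have h3 : 0 ≤ s.e 0 - s.a 0 := sub_nonneg.2 (s.a_le_e 0)
  nlinarith

/-- Separation: earlier gap `m` to the left of later gap `n`. -/
lemma sep_a (s : SlowSubdivision C) (hgap : StableGapCond ε s) {m n : ℕ}
    (hmn : m < n) (h : s.f m ≤ s.e n) :
    s.f n - s.e n < (1 - ε) * (s.e n - s.f m) := by
  have h1ε : 0 < 1 - ε := one_sub_eps_pos s hgap
  have han : s.f m ≤ s.a n := by
    by_contra hc
    push_neg at hc
    set w := (max (s.a n) (s.e m) + s.f m) / 2 with hwdef
    have hmax : max (s.a n) (s.e m) < s.f m := max_lt hc (s.e_lt_f m)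
    have hw1 : w < s.f m := by simp only [hwdef]; linarith
    have hw2 : s.e m < w := by
      have := le_max_right (s.a n) (s.e m); simp only [hwdef]; linarith
    have hw3 : s.a n ≤ w := by
      have := le_max_left (s.a n) (s.e m); simp only [hwdef]; linarith
    have hw4 : w ≤ s.b n :=
      (hw1.le.trans (h.trans ((s.e_lt_f n).le.trans (s.f_le_b n))))
    exact gap_disj_level s hmn (Icc_ab_subset s n ⟨hw3, hw4⟩) ⟨hw2, hw1⟩
  calc s.f n - s.e n < (1-ε) * (s.e n - s.a n) := (hgap n).1
    _ ≤ (1-ε) * (s.e n - s.f m) := by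
        apply mul_le_mul_of_nonneg_left (by linarith) h1ε.le

/-- Separation: later gap `n` to the left of earlier gap `m`. -/
lemma sep_b (s : SlowSubdivision C) (hgap : StableGapCond ε s) {m n : ℕ}
    (hmn : m < n) (h : s.f n ≤ s.e m) :
    s.f n - s.e n < (1 - ε) * (s.e m - s.f n) := by
  have h1ε : 0 < 1 - ε := one_sub_eps_pos s hgap
  have hbn : s.b n ≤ s.e m := by
    by_contra hc
    push_neg at hc
    set w := (s.e m + min (s.b n) (s.f m)) / 2 with hwdef
    have hmin : s.e m < min (s.b n) (s.f m) := lt_min hc (s.e_lt_f m)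
    have hw1 : s.e m < w := by simp only [hwdef]; linarith
    have hw2 : w < s.f m := by
      have := min_le_right (s.b n) (s.f m); simp only [hwdef]; linarith [s.e_lt_f m]
    have hw3 : w ≤ s.b n := by
      have := min_le_left (s.b n) (s.f m); simp only [hwdef]; linarith [hc]
    have hw4 : s.a n ≤ w :=
      le_trans ((s.a_le_e n).trans ((s.e_lt_f n).le.trans h)) hw1.le
    exact gap_disj_level s hmn (Icc_ab_subset s n ⟨hw4, hw3⟩) ⟨hw1, hw2⟩
  calc s.f n - s.e n < (1-ε) * (s.b n - s.f n) := (hgap n).2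
    _ ≤ (1-ε) * (s.e m - s.f n) := by
        apply mul_le_mul_of_nonneg_left (by linarith) h1ε.le

/-- margin lemma: gap `m` lies left of gap `n`, `m`'s length at most `n`'s. -/
lemma sep_main (s : SlowSubdivision C) (hgap : StableGapCond ε s) {m n : ℕ}
    (hne : m ≠ n) (h : s.f m ≤ s.e n)
    (hlen : s.f m - s.e m ≤ s.f n - s.e n) :
    s.f m - s.e m ≤ (1 - ε) * (s.e n - s.f m) := by
  rcases lt_or_gt_of_ne hne with hmn | hnm
  · exact hlen.trans (sep_a s hgap hmn h).le
  · exact (sep_b s hgap hnm h).le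

/-- margin lemma mirrored: gap `m` lies right of gap `n`. -/
lemma sep_main' (s : SlowSubdivision C) (hgap : StableGapCond ε s) {m n : ℕ}
    (hne : m ≠ n) (h : s.f n ≤ s.e m)
    (hlen : s.f m - s.e m ≤ s.f n - s.e n) :
    s.f m - s.e m ≤ (1 - ε) * (s.e m - s.f n) := by
  rcases lt_or_gt_of_ne hne with hmn | hnm
  · exact hlen.trans (sep_b s hgap hmn h).le
  · exact (sep_a s hgap hnm h).le

lemma a_mem_Icc (s : SlowSubdivision C) (n : ℕ) :
    s.a n ∈ Icc (sInf C) (sSup C) := by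
  rw [← s.level_zero]
  exact level_anti s (Nat.zero_le n)
    (Icc_ab_subset s n ⟨le_refl _, (s.a_le_e n).trans ((s.e_lt_f n).le.trans (s.f_le_b n))⟩)

lemma b_mem_Icc (s : SlowSubdivision C) (n : ℕ) :
    s.b n ∈ Icc (sInf C) (sSup C) := by
  rw [← s.level_zero]
  exact level_anti s (Nat.zero_le n)
    (Icc_ab_subset s n ⟨((s.a_le_e n).trans ((s.e_lt_f n).le.trans (s.f_le_b n))), le_refl _⟩)

lemma end_left (s : SlowSubdivision C) (hgap : StableGapCond ε s) (n : ℕ) :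
    s.f n - s.e n ≤ (1 - ε) * (s.e n - sInf C) := by
  have h1ε : 0 < 1 - ε := one_sub_eps_pos s hgap
  have := (a_mem_Icc s n).1
  calc s.f n - s.e n ≤ (1-ε) * (s.e n - s.a n) := (hgap n).1.le
    _ ≤ (1-ε) * (s.e n - sInf C) := by
        apply mul_le_mul_of_nonneg_left (by linarith) h1ε.le

lemma end_right (s : SlowSubdivision C) (hgap : StableGapCond ε s) (n : ℕ) :
    s.f n - s.e n ≤ (1 - ε) * (sSup C - s.f n) := by
  have h1ε : 0 < 1 - ε := one_sub_eps_pos s hgap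
  have := (b_mem_Icc s n).2
  calc s.f n - s.e n ≤ (1-ε) * (s.b n - s.f n) := (hgap n).2.le
    _ ≤ (1-ε) * (sSup C - s.f n) := by
        apply mul_le_mul_of_nonneg_left (by linarith) h1ε.le

end SHAux

namespace SHAux

open Set MeasureTheory

variable {C : Set ℝ} {ε : ℝ}

lemma e_mem_Icc (s : SlowSubdivision C) (n : ℕ) : s.e n ∈ Icc (sInf C) (sSup C) := by
  have := e_mem_level s n 0; rwa [s.level_zero] at this

lemma f_mem_Icc (s : SlowSubdivision C) (n : ℕ) : s.f n ∈ Icc (sInf C) (sSup C) := by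
  have := f_mem_level s n 0; rwa [s.level_zero] at this

lemma hull_lt (s : SlowSubdivision C) : sInf C < sSup C :=
  lt_of_le_of_lt (e_mem_Icc s 0).1 (lt_of_lt_of_le (s.e_lt_f 0) (f_mem_Icc s 0).2)

lemma gaps_pairwise_disjoint (s : SlowSubdivision C) :
    (Set.univ : Set ℕ).PairwiseDisjoint (fun n => Ioo (s.e n) (s.f n)) := by
  intro i _ j _ hij
  rcases lt_or_gt_of_ne hij with h | h
  · exact Set.disjoint_left.2 fun x hxi hxj => gap_disj_level s h (gap_subset s j hxj) hxi
  · exact Set.disjoint_left.2 fun x hxi hxj => gap_disj_level s h (gap_subset s i hxi) hxj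

lemma gap_sum_le (s : SlowSubdivision C) (T : Finset ℕ) :
    ∑ n ∈ T, (s.f n - s.e n) ≤ sSup C - sInf C := by
  have hsub : (⋃ n ∈ T, Ioo (s.e n) (s.f n)) ⊆ Icc (sInf C) (sSup C) := by
    intro x hx
    simp only [mem_iUnion] at hx
    obtain ⟨n, _, hn⟩ := hx
    have := gap_subset s n hn
    rw [← s.level_zero]
    exact level_anti s (Nat.zero_le n) this
  have hmeas := MeasureTheory.measure_biUnion_finset
    (fun i _ j _ hij => gaps_pairwise_disjoint s (mem_univ i) (mem_univ j) hij)
    (fun n _ => (measurableSet_Ioo : MeasurableSet (Ioo (s.e n) (s.f n))))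
    (μ := volume) (s := T)
  have hle : (∑ n ∈ T, volume (Ioo (s.e n) (s.f n))) ≤ volume (Icc (sInf C) (sSup C)) := by
    rw [← hmeas]; exact measure_mono hsub
  rw [Real.volume_Icc] at hle
  have h1 : (∑ n ∈ T, volume (Ioo (s.e n) (s.f n)))
      = ENNReal.ofReal (∑ n ∈ T, (s.f n - s.e n)) := by
    rw [ENNReal.ofReal_sum_of_nonneg (fun n _ => (sub_pos.2 (s.e_lt_f n)).le)]
    exact Finset.sum_congr rfl fun n _ => Real.volume_Ioo
  rw [h1] at hle
  exact (ENNReal.ofReal_le_ofReal_iff (sub_nonneg.2 (hull_lt s).le)).1 hle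

lemma finite_big_gaps (s : SlowSubdivision C) {c : ℝ} (hc : 0 < c) :
    {n : ℕ | c ≤ s.f n - s.e n}.Finite := by
  by_contra hinf
  have hinf' : {n : ℕ | c ≤ s.f n - s.e n}.Infinite := hinf
  set D := sSup C - sInf C
  obtain ⟨T, hTsub, hTcard⟩ := hinf'.exists_subset_card_eq (⌊D / c⌋₊ + 1)
  have hsum : (T.card : ℝ) * c ≤ ∑ n ∈ T, (s.f n - s.e n) := by
    have := Finset.card_nsmul_le_sum T (fun n => s.f n - s.e n) c
      (fun n hn => hTsub hn)
    rwa [nsmul_eq_mul] at this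
  have hD : (T.card : ℝ) * c ≤ D := hsum.trans (gap_sum_le s T)
  rw [hTcard] at hD
  have hcard : (⌊D / c⌋₊ + 1 : ℝ) ≤ D / c := by
    rw [le_div_iff₀ hc] at *
    push_cast at hD ⊢
    linarith
  have := Nat.lt_floor_add_one (D / c)
  push_cast at hcard
  linarith

/-- existence of a maximal gap inside `[x₁, x₂]`. -/
lemma exists_max_gap (s : SlowSubdivision C) {x₁ x₂ : ℝ}
    (hne : ∃ n, x₁ ≤ s.e n ∧ s.f n ≤ x₂) :
    ∃ N, (x₁ ≤ s.e N ∧ s.f N ≤ x₂) ∧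
      ∀ m, x₁ ≤ s.e m → s.f m ≤ x₂ → s.f m - s.e m ≤ s.f N - s.e N := by
  obtain ⟨n₀, hn₀⟩ := hne
  set c := s.f n₀ - s.e n₀ with hcdef
  have hc : 0 < c := sub_pos.2 (s.e_lt_f n₀)
  set T : Set ℕ := {m | (x₁ ≤ s.e m ∧ s.f m ≤ x₂) ∧ c ≤ s.f m - s.e m} with hTdef
  have hTfin : T.Finite := (finite_big_gaps s hc).subset (fun m hm => hm.2)
  have hn₀T : n₀ ∈ hTfin.toFinset := by
    rw [Set.Finite.mem_toFinset]; exact ⟨hn₀, le_refl _⟩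
  obtain ⟨N, hNmem, hNmax⟩ := Finset.exists_max_image hTfin.toFinset
    (fun m => s.f m - s.e m) ⟨n₀, hn₀T⟩
  rw [Set.Finite.mem_toFinset] at hNmem
  refine ⟨N, hNmem.1, fun m h1 h2 => ?_⟩
  rcases le_or_gt c (s.f m - s.e m) with h | h
  · exact hNmax m (by rw [Set.Finite.mem_toFinset]; exact ⟨⟨h1, h2⟩, h⟩)
  · calc s.f m - s.e m ≤ c := h.le
      _ ≤ s.f N - s.e N := by
        have := hNmax n₀ hn₀T
        calc c = s.f n₀ - s.e n₀ := hcdef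
          _ ≤ s.f N - s.e N := this

/-- a point of `Icc x₁ x₂ \ C` with `x₁ x₂ ∈ C` yields a gap inside `[x₁,x₂]`. -/
lemma exists_gap_between (s : SlowSubdivision C) {x₁ x₂ z : ℝ}
    (hx₁ : x₁ ∈ C) (hx₂ : x₂ ∈ C) (hz1 : x₁ < z) (hz2 : z < x₂) (hzC : z ∉ C) :
    ∃ n, x₁ ≤ s.e n ∧ s.f n ≤ x₂ := by
  classical
  have hIcc : x₁ ∈ Icc (sInf C) (sSup C) := by
    have := C_subset_level s 0 hx₁; rwa [s.level_zero] at this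
  have hIcc2 : x₂ ∈ Icc (sInf C) (sSup C) := by
    have := C_subset_level s 0 hx₂; rwa [s.level_zero] at this
  have hz0 : z ∈ s.level 0 := by
    rw [s.level_zero]; exact ⟨hIcc.1.trans hz1.le, hz2.le.trans hIcc2.2⟩
  have hex : ∃ m, z ∉ s.level m := by
    by_contra hc
    push_neg at hc
    exact hzC ((Set.ext_iff.mp s.iInter_level z).mp (mem_iInter.2 hc))
  have hmin := Nat.find_spec hex
  set m₀ := Nat.find hex with hm₀def
  have hm₀pos : m₀ ≠ 0 := by
    intro h
    rw [h] at hmin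
    exact hmin hz0
  obtain ⟨k, hk⟩ := Nat.exists_eq_succ_of_ne_zero hm₀pos
  have hprev : z ∈ s.level k := by
    by_contra hc
    have := Nat.find_min hex (by omega : k < m₀) hc
    exact this
  have hzgap : z ∈ Ioo (s.e k) (s.f k) := by
    by_contra hc
    apply hmin
    rw [hk, s.level_succ k]
    exact ⟨hprev, hc⟩
  refine ⟨k, ?_, ?_⟩
  · by_contra hc
    push_neg at hc
    exact (gap_disj_C s k hx₁) ⟨hc, hz1.trans hzgap.2⟩
  · by_contra hc
    push_neg at hc
    exact (gap_disj_C s k hx₂) ⟨hzgap.1.trans hz2, hc⟩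

/-- if there is no gap inside and `C` is totally disconnected, the interval is degenerate. -/
lemma le_of_no_gap (s : SlowSubdivision C) (htd : IsTotallyDisconnected C)
    {x₁ x₂ : ℝ} (hx₁ : x₁ ∈ C) (hx₂ : x₂ ∈ C)
    (hng : ¬ ∃ n, x₁ ≤ s.e n ∧ s.f n ≤ x₂) : x₂ ≤ x₁ := by
  by_contra hc
  push_neg at hc
  have hsub : Icc x₁ x₂ ⊆ C := by
    intro z hz
    rcases eq_or_lt_of_le hz.1 with rfl | h1
    · exact hx₁
    rcases eq_or_lt_of_le hz.2 with rfl | h2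
    · exact hx₂
    by_contra hzC
    exact hng (exists_gap_between s hx₁ hx₂ h1 h2 hzC)
  have := htd (Icc x₁ x₂) hsub isPreconnected_Icc
  have heq := this (mem_Icc.2 ⟨le_refl _, hc.le⟩) (mem_Icc.2 ⟨hc.le, le_refl _⟩)
  exact absurd heq hc.ne

end SHAux

namespace SHAux

open Set

variable {C : Set ℝ} {ε : ℝ}

lemma gap_isHole (s : SlowSubdivision C) (n : ℕ) :
    IsHole C (Ioo (s.e n) (s.f n)) := by
  constructor
  · set z := (s.e n + s.f n) / 2 with hzdef
    have hz : z ∈ Ioo (s.e n) (s.f n) := by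
      constructor <;> (simp only [hzdef]; linarith [s.e_lt_f n])
    refine ⟨z, hz, ?_⟩
    apply Subset.antisymm
    · intro w hw
      have hconn : IsPreconnected (connectedComponentIn Cᶜ z) :=
        isPreconnected_connectedComponentIn
      have hord : (connectedComponentIn Cᶜ z).OrdConnected := hconn.ordConnected
      have hzmem : z ∈ connectedComponentIn Cᶜ z :=
        mem_connectedComponentIn (by exact fun h => gap_disj_C s n h hz)
      by_contra hwgap
      rcases lt_trichotomy w (s.e n) with hlt | heq | hgt
      · have : s.e n ∈ connectedComponentIn Cᶜ z :=
          hord.out hw hzmem ⟨hlt.le, hz.1.le⟩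
        exact (connectedComponentIn_subset Cᶜ z this) (e_mem s n)
      · subst heq
        exact (connectedComponentIn_subset Cᶜ z hw) (e_mem s n)
      · have hge : s.f n ≤ w := by
          by_contra hc
          push_neg at hc
          exact hwgap ⟨hgt, hc⟩
        rcases eq_or_lt_of_le hge with rfl | hgt2
        · exact (connectedComponentIn_subset Cᶜ z hw) (f_mem s n)
        · have : s.f n ∈ connectedComponentIn Cᶜ z :=
            hord.out hzmem hw ⟨hz.2.le, hgt2.le⟩
          exact (connectedComponentIn_subset Cᶜ z this) (f_mem s n)
    · exact isPreconnected_Ioo.subset_connectedComponentIn hz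
        (fun w hw h => gap_disj_C s n h hw)
  · intro w hw
    exact ⟨(e_mem_Icc s n).1.trans hw.1.le, hw.2.le.trans (f_mem_Icc s n).2⟩

end SHAux

namespace SHAux

open Set

variable {C : Set ℝ} {ε L t : ℝ}

lemma C_subset_Icc (s : SlowSubdivision C) : C ⊆ Icc (sInf C) (sSup C) := by
  intro x hx
  have := C_subset_level s 0 hx
  rwa [s.level_zero] at this

variable {K F : Set ℝ}

structure SHState where
  x₁ : ℝ
  x₂ : ℝ
  y₁ : ℝ
  y₂ : ℝ

structure Inv (sK : SlowSubdivision K) (sF : SlowSubdivision F)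
    (S : ℝ × ℝ → ℝ) (t ε L : ℝ) (st : SHState) : Prop where
  hx12 : st.x₁ ≤ st.x₂
  hy12 : st.y₁ ≤ st.y₂
  hx₁ : st.x₁ ∈ K
  hx₂ : st.x₂ ∈ K
  hy₁ : st.y₁ ∈ F
  hy₂ : st.y₂ ∈ F
  hT₁ : S (st.x₁, st.y₁) ≤ t
  hT₂ : t ≤ S (st.x₂, st.y₂)
  hQI : ∀ n, st.x₁ ≤ sK.e n → sK.f n ≤ st.x₂ →
        (1+L) * (sK.f n - sK.e n) ≤ (1-L) * (st.y₂ - st.y₁)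
  hQJ : ∀ n, st.y₁ ≤ sF.e n → sF.f n ≤ st.y₂ →
        (1+L) * (sF.f n - sF.e n) ≤ (1-L) * (st.x₂ - st.x₁)
  hEI₁ : ∀ n, st.x₁ ≤ sK.e n → sK.f n ≤ st.x₂ →
        sK.f n - sK.e n ≤ (1-ε) * (sK.e n - st.x₁)
  hEI₂ : ∀ n, st.x₁ ≤ sK.e n → sK.f n ≤ st.x₂ →
        sK.f n - sK.e n ≤ (1-ε) * (st.x₂ - sK.f n)
  hEJ₁ : ∀ n, st.y₁ ≤ sF.e n → sF.f n ≤ st.y₂ →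
        sF.f n - sF.e n ≤ (1-ε) * (sF.e n - st.y₁)
  hEJ₂ : ∀ n, st.y₁ ≤ sF.e n → sF.f n ≤ st.y₂ →
        sF.f n - sF.e n ≤ (1-ε) * (st.y₂ - sF.f n)

variable (sK : SlowSubdivision K) (sF : SlowSubdivision F)

def IsplitP (st st' : SHState) (n : ℕ) : Prop :=
  (st.x₁ ≤ sK.e n ∧ sK.f n ≤ st.x₂) ∧
  ¬ (st'.x₁ ≤ sK.e n ∧ sK.f n ≤ st'.x₂) ∧
  (∀ m, st.x₁ ≤ sK.e m → sK.f m ≤ st.x₂ → sK.f m - sK.e m ≤ sK.f n - sK.e n) ∧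
  (∀ m, st.y₁ ≤ sF.e m → sF.f m ≤ st.y₂ → sF.f m - sF.e m ≤ sK.f n - sK.e n)

def JsplitP (st st' : SHState) (n : ℕ) : Prop :=
  (st.y₁ ≤ sF.e n ∧ sF.f n ≤ st.y₂) ∧
  ¬ (st'.y₁ ≤ sF.e n ∧ sF.f n ≤ st'.y₂) ∧
  (∀ m, st.x₁ ≤ sK.e m → sK.f m ≤ st.x₂ → sK.f m - sK.e m ≤ sF.f n - sF.e n) ∧
  (∀ m, st.y₁ ≤ sF.e m → sF.f m ≤ st.y₂ → sF.f m - sF.e m ≤ sF.f n - sF.e n)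

def Rel (st st' : SHState) : Prop :=
  st.x₁ ≤ st'.x₁ ∧ st'.x₂ ≤ st.x₂ ∧ st.y₁ ≤ st'.y₁ ∧ st'.y₂ ≤ st.y₂ ∧
  ((st' = st ∧ st.x₁ = st.x₂ ∧ st.y₁ = st.y₂) ∨
   (∃ n, IsplitP sK sF st st' n) ∨ (∃ n, JsplitP sK sF st st' n))

lemma step_splitI (hgapK : StableGapCond ε sK)
    (S : ℝ × ℝ → ℝ) (t : ℝ) (hL0 : 0 ≤ L) (hkey : (1+L)*(1-ε) ≤ 1-L)
    (hFIcc : F ⊆ Icc (sInf F) (sSup F))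
    (hjump₁ : ∀ u v c d : ℝ, u ∈ Icc (sInf K) (sSup K) → v ∈ Icc (sInf K) (sSup K) →
      c ∈ Icc (sInf F) (sSup F) → d ∈ Icc (sInf F) (sSup F) → u ≤ v → c ≤ d →
      (1+L)*(v-u) ≤ (1-L)*(d-c) → S (v, c) ≤ S (u, d))
    (st : SHState) (hinv : Inv sK sF S t ε L st) (N : ℕ)
    (hN1 : st.x₁ ≤ sK.e N) (hN2 : sK.f N ≤ st.x₂)
    (hdomI : ∀ m, st.x₁ ≤ sK.e m → sK.f m ≤ st.x₂ →
      sK.f m - sK.e m ≤ sK.f N - sK.e N)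
    (hdomJ : ∀ m, st.y₁ ≤ sF.e m → sF.f m ≤ st.y₂ →
      sF.f m - sF.e m ≤ sK.f N - sK.e N) :
    ∃ st' : SHState, Inv sK sF S t ε L st' ∧
      st.x₁ ≤ st'.x₁ ∧ st'.x₂ ≤ st.x₂ ∧ st'.y₁ = st.y₁ ∧ st'.y₂ = st.y₂ ∧
      IsplitP sK sF st st' N := by
  have heN2 : sK.e N ≤ st.x₂ := (sK.e_lt_f N).le.trans hN2
  have hfN1 : st.x₁ ≤ sK.f N := hN1.trans (sK.e_lt_f N).le
  have hgapN := hinv.hQI N hN1 hN2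
  have hjmp : S (sK.f N, st.y₁) ≤ S (sK.e N, st.y₂) :=
    hjump₁ (sK.e N) (sK.f N) st.y₁ st.y₂ (e_mem_Icc sK N) (f_mem_Icc sK N)
      (hFIcc hinv.hy₁) (hFIcc hinv.hy₂) (sK.e_lt_f N).le hinv.hy12 hgapN
  by_cases hc : t ≤ S (sK.e N, st.y₂)
  · refine ⟨⟨st.x₁, sK.e N, st.y₁, st.y₂⟩, ?_, le_refl _, heN2, rfl, rfl, ?_⟩
    · exact {
        hx12 := hN1
        hy12 := hinv.hy12
        hx₁ := hinv.hx₁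
        hx₂ := e_mem sK N
        hy₁ := hinv.hy₁
        hy₂ := hinv.hy₂
        hT₁ := hinv.hT₁
        hT₂ := hc
        hQI := fun m h1 h2 => hinv.hQI m h1 (h2.trans heN2)
        hQJ := by
          intro m h1 h2
          have hd := hdomJ m h1 h2
          have hE := hinv.hEI₁ N hN1 hN2
          have h0 : (0:ℝ) ≤ sK.e N - st.x₁ := by linarith
          calc (1+L)*(sF.f m - sF.e m) ≤ (1+L)*(sK.f N - sK.e N) := by
                apply mul_le_mul_of_nonneg_left hd (by linarith)
            _ ≤ (1+L)*((1-ε)*(sK.e N - st.x₁)) := by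
                apply mul_le_mul_of_nonneg_left hE (by linarith)
            _ = ((1+L)*(1-ε))*(sK.e N - st.x₁) := by ring
            _ ≤ (1-L)*(sK.e N - st.x₁) := mul_le_mul_of_nonneg_right hkey h0
        hEI₁ := fun m h1 h2 => hinv.hEI₁ m h1 (h2.trans heN2)
        hEI₂ := by
          intro m h1 h2
          have hmN : m ≠ N := by
            intro h
            rw [h] at h2
            exact absurd h2 (not_le.2 (sK.e_lt_f N))
          exact sep_main sK hgapK hmN h2 (hdomI m h1 (h2.trans heN2))
        hEJ₁ := hinv.hEJ₁
        hEJ₂ := hinv.hEJ₂ }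
    · exact ⟨⟨hN1, hN2⟩, fun h => absurd h.2 (not_le.2 (sK.e_lt_f N)), hdomI, hdomJ⟩
  · push_neg at hc
    have hT₁' : S (sK.f N, st.y₁) ≤ t := hjmp.trans hc.le
    refine ⟨⟨sK.f N, st.x₂, st.y₁, st.y₂⟩, ?_, hfN1, le_refl _, rfl, rfl, ?_⟩
    · exact {
        hx12 := hN2
        hy12 := hinv.hy12
        hx₁ := f_mem sK N
        hx₂ := hinv.hx₂
        hy₁ := hinv.hy₁
        hy₂ := hinv.hy₂
        hT₁ := hT₁'
        hT₂ := hinv.hT₂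
        hQI := fun m h1 h2 => hinv.hQI m (hfN1.trans h1) h2
        hQJ := by
          intro m h1 h2
          have hd := hdomJ m h1 h2
          have hE := hinv.hEI₂ N hN1 hN2
          have h0 : (0:ℝ) ≤ st.x₂ - sK.f N := by linarith
          calc (1+L)*(sF.f m - sF.e m) ≤ (1+L)*(sK.f N - sK.e N) := by
                apply mul_le_mul_of_nonneg_left hd (by linarith)
            _ ≤ (1+L)*((1-ε)*(st.x₂ - sK.f N)) := by
                apply mul_le_mul_of_nonneg_left hE (by linarith)
            _ = ((1+L)*(1-ε))*(st.x₂ - sK.f N) := by ring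
            _ ≤ (1-L)*(st.x₂ - sK.f N) := mul_le_mul_of_nonneg_right hkey h0
        hEI₁ := by
          intro m h1 h2
          have hmN : m ≠ N := by
            intro h
            rw [h] at h1
            exact absurd h1 (not_le.2 (sK.e_lt_f N))
          exact sep_main' sK hgapK hmN h1 (hdomI m (hfN1.trans h1) h2)
        hEI₂ := fun m h1 h2 => hinv.hEI₂ m (hfN1.trans h1) h2
        hEJ₁ := hinv.hEJ₁
        hEJ₂ := hinv.hEJ₂ }
    · exact ⟨⟨hN1, hN2⟩, fun h => absurd h.1 (not_le.2 (sK.e_lt_f N)), hdomI, hdomJ⟩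

lemma step_splitJ (hgapF : StableGapCond ε sF)
    (S : ℝ × ℝ → ℝ) (t : ℝ) (hL0 : 0 ≤ L) (hkey : (1+L)*(1-ε) ≤ 1-L)
    (hKIcc : K ⊆ Icc (sInf K) (sSup K))
    (hjump₂ : ∀ c d u v : ℝ, c ∈ Icc (sInf K) (sSup K) → d ∈ Icc (sInf K) (sSup K) →
      u ∈ Icc (sInf F) (sSup F) → v ∈ Icc (sInf F) (sSup F) → c ≤ d → u ≤ v →
      (1+L)*(v-u) ≤ (1-L)*(d-c) → S (c, v) ≤ S (d, u))
    (st : SHState) (hinv : Inv sK sF S t ε L st) (N : ℕ)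
    (hN1 : st.y₁ ≤ sF.e N) (hN2 : sF.f N ≤ st.y₂)
    (hdomI : ∀ m, st.x₁ ≤ sK.e m → sK.f m ≤ st.x₂ →
      sK.f m - sK.e m ≤ sF.f N - sF.e N)
    (hdomJ : ∀ m, st.y₁ ≤ sF.e m → sF.f m ≤ st.y₂ →
      sF.f m - sF.e m ≤ sF.f N - sF.e N) :
    ∃ st' : SHState, Inv sK sF S t ε L st' ∧
      st'.x₁ = st.x₁ ∧ st'.x₂ = st.x₂ ∧ st.y₁ ≤ st'.y₁ ∧ st'.y₂ ≤ st.y₂ ∧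
      JsplitP sK sF st st' N := by
  have heN2 : sF.e N ≤ st.y₂ := (sF.e_lt_f N).le.trans hN2
  have hfN1 : st.y₁ ≤ sF.f N := hN1.trans (sF.e_lt_f N).le
  have hgapN := hinv.hQJ N hN1 hN2
  have hjmp : S (st.x₁, sF.f N) ≤ S (st.x₂, sF.e N) :=
    hjump₂ st.x₁ st.x₂ (sF.e N) (sF.f N) (hKIcc hinv.hx₁) (hKIcc hinv.hx₂)
      (e_mem_Icc sF N) (f_mem_Icc sF N) hinv.hx12 (sF.e_lt_f N).le hgapN
  by_cases hc : t ≤ S (st.x₂, sF.e N)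
  · refine ⟨⟨st.x₁, st.x₂, st.y₁, sF.e N⟩, ?_, rfl, rfl, le_refl _, heN2, ?_⟩
    · exact {
        hx12 := hinv.hx12
        hy12 := hN1
        hx₁ := hinv.hx₁
        hx₂ := hinv.hx₂
        hy₁ := hinv.hy₁
        hy₂ := e_mem sF N
        hT₁ := hinv.hT₁
        hT₂ := hc
        hQJ := fun m h1 h2 => hinv.hQJ m h1 (h2.trans heN2)
        hQI := by
          intro m h1 h2
          have hd := hdomI m h1 h2
          have hE := hinv.hEJ₁ N hN1 hN2
          have h0 : (0:ℝ) ≤ sF.e N - st.y₁ := by linarith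
          calc (1+L)*(sK.f m - sK.e m) ≤ (1+L)*(sF.f N - sF.e N) := by
                apply mul_le_mul_of_nonneg_left hd (by linarith)
            _ ≤ (1+L)*((1-ε)*(sF.e N - st.y₁)) := by
                apply mul_le_mul_of_nonneg_left hE (by linarith)
            _ = ((1+L)*(1-ε))*(sF.e N - st.y₁) := by ring
            _ ≤ (1-L)*(sF.e N - st.y₁) := mul_le_mul_of_nonneg_right hkey h0
        hEJ₁ := fun m h1 h2 => hinv.hEJ₁ m h1 (h2.trans heN2)
        hEJ₂ := by
          intro m h1 h2
          have hmN : m ≠ N := by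
            intro h
            rw [h] at h2
            exact absurd h2 (not_le.2 (sF.e_lt_f N))
          exact sep_main sF hgapF hmN h2 (hdomJ m h1 (h2.trans heN2))
        hEI₁ := hinv.hEI₁
        hEI₂ := hinv.hEI₂ }
    · exact ⟨⟨hN1, hN2⟩, fun h => absurd h.2 (not_le.2 (sF.e_lt_f N)), hdomI, hdomJ⟩
  · push_neg at hc
    have hT₁' : S (st.x₁, sF.f N) ≤ t := hjmp.trans hc.le
    refine ⟨⟨st.x₁, st.x₂, sF.f N, st.y₂⟩, ?_, rfl, rfl, hfN1, le_refl _, ?_⟩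
    · exact {
        hx12 := hinv.hx12
        hy12 := hN2
        hx₁ := hinv.hx₁
        hx₂ := hinv.hx₂
        hy₁ := f_mem sF N
        hy₂ := hinv.hy₂
        hT₁ := hT₁'
        hT₂ := hinv.hT₂
        hQJ := fun m h1 h2 => hinv.hQJ m (hfN1.trans h1) h2
        hQI := by
          intro m h1 h2
          have hd := hdomI m h1 h2
          have hE := hinv.hEJ₂ N hN1 hN2
          have h0 : (0:ℝ) ≤ st.y₂ - sF.f N := by linarith
          calc (1+L)*(sK.f m - sK.e m) ≤ (1+L)*(sF.f N - sF.e N) := by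
                apply mul_le_mul_of_nonneg_left hd (by linarith)
            _ ≤ (1+L)*((1-ε)*(st.y₂ - sF.f N)) := by
                apply mul_le_mul_of_nonneg_left hE (by linarith)
            _ = ((1+L)*(1-ε))*(st.y₂ - sF.f N) := by ring
            _ ≤ (1-L)*(st.y₂ - sF.f N) := mul_le_mul_of_nonneg_right hkey h0
        hEJ₁ := by
          intro m h1 h2
          have hmN : m ≠ N := by
            intro h
            rw [h] at h1
            exact absurd h1 (not_le.2 (sF.e_lt_f N))
          exact sep_main' sF hgapF hmN h1 (hdomJ m (hfN1.trans h1) h2)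
        hEJ₂ := fun m h1 h2 => hinv.hEJ₂ m (hfN1.trans h1) h2
        hEI₁ := hinv.hEI₁
        hEI₂ := hinv.hEI₂ }
    · exact ⟨⟨hN1, hN2⟩, fun h => absurd h.1 (not_le.2 (sF.e_lt_f N)), hdomI, hdomJ⟩

end SHAux

namespace SHAux

open Set Filter Topology

variable {ε L : ℝ} {K F : Set ℝ}
variable (sK : SlowSubdivision K) (sF : SlowSubdivision F)

lemma step_exists (hgapK : StableGapCond ε sK) (hgapF : StableGapCond ε sF)
    (htdK : IsTotallyDisconnected K) (htdF : IsTotallyDisconnected F)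
    (S : ℝ × ℝ → ℝ) (t : ℝ) (hL0 : 0 ≤ L) (hkey : (1+L)*(1-ε) ≤ 1-L)
    (hjump₁ : ∀ u v c d : ℝ, u ∈ Icc (sInf K) (sSup K) → v ∈ Icc (sInf K) (sSup K) →
      c ∈ Icc (sInf F) (sSup F) → d ∈ Icc (sInf F) (sSup F) → u ≤ v → c ≤ d →
      (1+L)*(v-u) ≤ (1-L)*(d-c) → S (v, c) ≤ S (u, d))
    (hjump₂ : ∀ c d u v : ℝ, c ∈ Icc (sInf K) (sSup K) → d ∈ Icc (sInf K) (sSup K) →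
      u ∈ Icc (sInf F) (sSup F) → v ∈ Icc (sInf F) (sSup F) → c ≤ d → u ≤ v →
      (1+L)*(v-u) ≤ (1-L)*(d-c) → S (c, v) ≤ S (d, u))
    (st : SHState) (hinv : Inv sK sF S t ε L st) :
    ∃ st', Inv sK sF S t ε L st' ∧ Rel sK sF st st' := by
  rcases eq_or_lt_of_le hinv.hx12 with hxe | hxl
  · rcases eq_or_lt_of_le hinv.hy12 with hye | hyl
    · exact ⟨st, hinv, le_refl _, le_refl _, le_refl _, le_refl _,
        Or.inl ⟨rfl, hxe, hye⟩⟩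
    · -- x degenerate, split J
      have hgex : ∃ n, st.y₁ ≤ sF.e n ∧ sF.f n ≤ st.y₂ := by
        by_contra hng
        exact absurd (le_of_no_gap sF htdF hinv.hy₁ hinv.hy₂ hng) (not_le.2 hyl)
      obtain ⟨M, hMin, hMmax⟩ := exists_max_gap sF hgex
      have hdomI : ∀ m, st.x₁ ≤ sK.e m → sK.f m ≤ st.x₂ →
          sK.f m - sK.e m ≤ sF.f M - sF.e M := by
        intro m h1 h2
        exfalso
        rw [← hxe] at h2
        linarith [sK.e_lt_f m]
      obtain ⟨st', h1, h2, h3, h4, h5, h6⟩ := step_splitJ sK sF hgapF S t hL0 hkey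
        (C_subset_Icc sK) hjump₂ st hinv M hMin.1 hMin.2 hdomI hMmax
      exact ⟨st', h1, le_of_eq h2.symm, le_of_eq h3, h4, h5, Or.inr (Or.inr ⟨M, h6⟩)⟩
  · rcases eq_or_lt_of_le hinv.hy12 with hye | hyl
    · -- y degenerate, split I
      have hgex : ∃ n, st.x₁ ≤ sK.e n ∧ sK.f n ≤ st.x₂ := by
        by_contra hng
        exact absurd (le_of_no_gap sK htdK hinv.hx₁ hinv.hx₂ hng) (not_le.2 hxl)
      obtain ⟨N, hNin, hNmax⟩ := exists_max_gap sK hgex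
      have hdomJ : ∀ m, st.y₁ ≤ sF.e m → sF.f m ≤ st.y₂ →
          sF.f m - sF.e m ≤ sK.f N - sK.e N := by
        intro m h1 h2
        exfalso
        rw [← hye] at h2
        linarith [sF.e_lt_f m]
      obtain ⟨st', h1, h2, h3, h4, h5, h6⟩ := step_splitI sK sF hgapK S t hL0 hkey
        (C_subset_Icc sF) hjump₁ st hinv N hNin.1 hNin.2 hNmax hdomJ
      exact ⟨st', h1, h2, h3, le_of_eq h4.symm, le_of_eq h5, Or.inr (Or.inl ⟨N, h6⟩)⟩
    · -- both nondegenerate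
      have hgexK : ∃ n, st.x₁ ≤ sK.e n ∧ sK.f n ≤ st.x₂ := by
        by_contra hng
        exact absurd (le_of_no_gap sK htdK hinv.hx₁ hinv.hx₂ hng) (not_le.2 hxl)
      have hgexF : ∃ n, st.y₁ ≤ sF.e n ∧ sF.f n ≤ st.y₂ := by
        by_contra hng
        exact absurd (le_of_no_gap sF htdF hinv.hy₁ hinv.hy₂ hng) (not_le.2 hyl)
      obtain ⟨N, hNin, hNmax⟩ := exists_max_gap sK hgexK
      obtain ⟨M, hMin, hMmax⟩ := exists_max_gap sF hgexF
      rcases le_total (sF.f M - sF.e M) (sK.f N - sK.e N) with hle | hle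
      · obtain ⟨st', h1, h2, h3, h4, h5, h6⟩ := step_splitI sK sF hgapK S t hL0 hkey
          (C_subset_Icc sF) hjump₁ st hinv N hNin.1 hNin.2 hNmax
          (fun m hm1 hm2 => (hMmax m hm1 hm2).trans hle)
        exact ⟨st', h1, h2, h3, le_of_eq h4.symm, le_of_eq h5, Or.inr (Or.inl ⟨N, h6⟩)⟩
      · obtain ⟨st', h1, h2, h3, h4, h5, h6⟩ := step_splitJ sK sF hgapF S t hL0 hkey
          (C_subset_Icc sK) hjump₂ st hinv M hMin.1 hMin.2
          (fun m hm1 hm2 => (hNmax m hm1 hm2).trans hle) hMmax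
        exact ⟨st', h1, le_of_eq h2.symm, le_of_eq h3, h4, h5, Or.inr (Or.inr ⟨M, h6⟩)⟩

end SHAux

namespace SHAux

open Set Filter Topology

variable {ε L : ℝ} {K F : Set ℝ}
variable (sK : SlowSubdivision K) (sF : SlowSubdivision F)

lemma finite_steps_contra
    (x1s x2s y1s y2s : ℕ → ℝ)
    (mono1 : Monotone x1s) (anti2 : Antitone x2s)
    (mono3 : Monotone y1s) (anti4 : Antitone y2s)
    {c : ℝ} (hc : 0 < c)
    (hbig : ∀ k,
      (∃ n, ¬(x1s (k+1) ≤ sK.e n ∧ sK.f n ≤ x2s (k+1)) ∧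
        (x1s k ≤ sK.e n ∧ sK.f n ≤ x2s k) ∧ c ≤ sK.f n - sK.e n) ∨
      (∃ n, ¬(y1s (k+1) ≤ sF.e n ∧ sF.f n ≤ y2s (k+1)) ∧
        (y1s k ≤ sF.e n ∧ sF.f n ≤ y2s k) ∧ c ≤ sF.f n - sF.e n)) :
    False := by
  classical
  set A := {k : ℕ | ∃ n, ¬(x1s (k+1) ≤ sK.e n ∧ sK.f n ≤ x2s (k+1)) ∧
        (x1s k ≤ sK.e n ∧ sK.f n ≤ x2s k) ∧ c ≤ sK.f n - sK.e n} with hA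
  set B := {k : ℕ | ∃ n, ¬(y1s (k+1) ≤ sF.e n ∧ sF.f n ≤ y2s (k+1)) ∧
        (y1s k ≤ sF.e n ∧ sF.f n ≤ y2s k) ∧ c ≤ sF.f n - sF.e n} with hB
  have hcover : A ∪ B = univ := by
    apply eq_univ_of_forall
    intro k
    rcases hbig k with h | h
    · exact Or.inl h
    · exact Or.inr h
  set φ : ℕ → ℕ := fun k => if h : k ∈ A then h.choose else 0 with hφ
  set ψ : ℕ → ℕ := fun k => if h : k ∈ B then h.choose else 0 with hψ
  have hφspec : ∀ k (hk : k ∈ A),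
      ¬(x1s (k+1) ≤ sK.e (φ k) ∧ sK.f (φ k) ≤ x2s (k+1)) ∧
        (x1s k ≤ sK.e (φ k) ∧ sK.f (φ k) ≤ x2s k) ∧ c ≤ sK.f (φ k) - sK.e (φ k) := by
    intro k hk
    simp only [hφ, dif_pos hk]
    exact hk.choose_spec
  have hψspec : ∀ k (hk : k ∈ B),
      ¬(y1s (k+1) ≤ sF.e (ψ k) ∧ sF.f (ψ k) ≤ y2s (k+1)) ∧
        (y1s k ≤ sF.e (ψ k) ∧ sF.f (ψ k) ≤ y2s k) ∧ c ≤ sF.f (ψ k) - sF.e (ψ k) := by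
    intro k hk
    simp only [hψ, dif_pos hk]
    exact hk.choose_spec
  have hkeyA : ∀ i ∈ A, ∀ j ∈ A, i < j → φ i ≠ φ j := by
    intro i hi j hj hij heq
    have h1 := (hφspec i hi).1
    have h2 := (hφspec j hj).2.1
    rw [heq] at h1
    have hij' : i + 1 ≤ j := hij
    exact h1 ⟨(mono1 hij').trans h2.1, h2.2.trans (anti2 hij')⟩
  have hkeyB : ∀ i ∈ B, ∀ j ∈ B, i < j → ψ i ≠ ψ j := by
    intro i hi j hj hij heq
    have h1 := (hψspec i hi).1
    have h2 := (hψspec j hj).2.1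
    rw [heq] at h1
    have hij' : i + 1 ≤ j := hij
    exact h1 ⟨(mono3 hij').trans h2.1, h2.2.trans (anti4 hij')⟩
  have hφinj : InjOn φ A := by
    intro i hi j hj heq
    by_contra hne
    rcases Ne.lt_or_gt hne with h | h
    · exact hkeyA i hi j hj h heq
    · exact hkeyA j hj i hi h heq.symm
  have hψinj : InjOn ψ B := by
    intro i hi j hj heq
    by_contra hne
    rcases Ne.lt_or_gt hne with h | h
    · exact hkeyB i hi j hj h heq
    · exact hkeyB j hj i hi h heq.symm
  have hAfin : A.Finite := by
    apply Set.Finite.of_finite_image _ hφinj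
    apply Set.Finite.subset (finite_big_gaps sK hc)
    rintro _ ⟨k, hk, rfl⟩
    exact (hφspec k hk).2.2
  have hBfin : B.Finite := by
    apply Set.Finite.of_finite_image _ hψinj
    apply Set.Finite.subset (finite_big_gaps sF hc)
    rintro _ ⟨k, hk, rfl⟩
    exact (hψspec k hk).2.2
  exact Set.infinite_univ (α := ℕ) (hcover ▸ hAfin.union hBfin)

end SHAux

namespace SHAux

open Set Filter Topology

variable {ε L : ℝ} {K F : Set ℝ}
variable (sK : SlowSubdivision K) (sF : SlowSubdivision F)

lemma key_lemma (hgapK : StableGapCond ε sK) (hgapF : StableGapCond ε sF)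
    (htdK : IsTotallyDisconnected K) (htdF : IsTotallyDisconnected F)
    (hclK : IsClosed K) (hclF : IsClosed F)
    (S : ℝ × ℝ → ℝ) (t : ℝ) (hL0 : 0 ≤ L) (hkey : (1+L)*(1-ε) ≤ 1-L)
    (hjump₁ : ∀ u v c d : ℝ, u ∈ Icc (sInf K) (sSup K) → v ∈ Icc (sInf K) (sSup K) →
      c ∈ Icc (sInf F) (sSup F) → d ∈ Icc (sInf F) (sSup F) → u ≤ v → c ≤ d →
      (1+L)*(v-u) ≤ (1-L)*(d-c) → S (v, c) ≤ S (u, d))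
    (hjump₂ : ∀ c d u v : ℝ, c ∈ Icc (sInf K) (sSup K) → d ∈ Icc (sInf K) (sSup K) →
      u ∈ Icc (sInf F) (sSup F) → v ∈ Icc (sInf F) (sSup F) → c ≤ d → u ≤ v →
      (1+L)*(v-u) ≤ (1-L)*(d-c) → S (c, v) ≤ S (d, u))
    (hScont : ContinuousOn S (Icc (sInf K) (sSup K) ×ˢ Icc (sInf F) (sSup F)))
    (st0 : SHState) (hinv0 : Inv sK sF S t ε L st0) :
    ∃ x ∈ K, ∃ y ∈ F, S (x, y) = t := by
  classical
  have hstep : ∀ g : {st : SHState // Inv sK sF S t ε L st},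
      ∃ g' : {st : SHState // Inv sK sF S t ε L st}, Rel sK sF g.1 g'.1 := by
    intro g
    obtain ⟨st', h1, h2⟩ := step_exists sK sF hgapK hgapF htdK htdF S t hL0 hkey
      hjump₁ hjump₂ g.1 g.2
    exact ⟨⟨st', h1⟩, h2⟩
  choose next hnext using hstep
  set seq : ℕ → {st : SHState // Inv sK sF S t ε L st} :=
    fun k => next^[k] ⟨st0, hinv0⟩ with hseq
  have hrel : ∀ k, Rel sK sF (seq k).1 (seq (k+1)).1 := by
    intro k
    have h : seq (k+1) = next (seq k) := by
      simp only [hseq, Function.iterate_succ_apply']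
    rw [h]
    exact hnext (seq k)
  set x1s : ℕ → ℝ := fun k => (seq k).1.x₁ with hx1s
  set x2s : ℕ → ℝ := fun k => (seq k).1.x₂ with hx2s
  set y1s : ℕ → ℝ := fun k => (seq k).1.y₁ with hy1s
  set y2s : ℕ → ℝ := fun k => (seq k).1.y₂ with hy2s
  have mono1 : Monotone x1s := monotone_nat_of_le_succ fun k => (hrel k).1
  have anti2 : Antitone x2s := antitone_nat_of_succ_le fun k => (hrel k).2.1
  have mono3 : Monotone y1s := monotone_nat_of_le_succ fun k => (hrel k).2.2.1
  have anti4 : Antitone y2s := antitone_nat_of_succ_le fun k => (hrel k).2.2.2.1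
  have hx1le : ∀ j k, x1s j ≤ x2s k := by
    intro j k
    calc x1s j ≤ x1s (max j k) := mono1 (le_max_left j k)
      _ ≤ x2s (max j k) := (seq (max j k)).2.hx12
      _ ≤ x2s k := anti2 (le_max_right j k)
  have hy1le : ∀ j k, y1s j ≤ y2s k := by
    intro j k
    calc y1s j ≤ y1s (max j k) := mono3 (le_max_left j k)
      _ ≤ y2s (max j k) := (seq (max j k)).2.hy12
      _ ≤ y2s k := anti4 (le_max_right j k)
  have hb1 : BddAbove (range x1s) := ⟨x2s 0, by rintro _ ⟨k, rfl⟩; exact hx1le k 0⟩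
  have hb2 : BddBelow (range x2s) := ⟨x1s 0, by rintro _ ⟨k, rfl⟩; exact hx1le 0 k⟩
  have hb3 : BddAbove (range y1s) := ⟨y2s 0, by rintro _ ⟨k, rfl⟩; exact hy1le k 0⟩
  have hb4 : BddBelow (range y2s) := ⟨y1s 0, by rintro _ ⟨k, rfl⟩; exact hy1le 0 k⟩
  set X : ℝ := ⨆ k, x1s k with hX
  set X' : ℝ := ⨅ k, x2s k with hX'
  set Y : ℝ := ⨆ k, y1s k with hY
  set Y' : ℝ := ⨅ k, y2s k with hY'
  have hXle : X ≤ X' := le_ciInf fun k => ciSup_le fun j => hx1le j k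
  have hYle : Y ≤ Y' := le_ciInf fun k => ciSup_le fun j => hy1le j k
  have htendX : Tendsto x1s atTop (𝓝 X) := tendsto_atTop_ciSup mono1 hb1
  have htendX' : Tendsto x2s atTop (𝓝 X') := tendsto_atTop_ciInf anti2 hb2
  have htendY : Tendsto y1s atTop (𝓝 Y) := tendsto_atTop_ciSup mono3 hb3
  have htendY' : Tendsto y2s atTop (𝓝 Y') := tendsto_atTop_ciInf anti4 hb4
  have hXK : X ∈ K :=
    hclK.mem_of_tendsto htendX (Eventually.of_forall fun k => (seq k).2.hx₁)
  have hX'K : X' ∈ K :=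
    hclK.mem_of_tendsto htendX' (Eventually.of_forall fun k => (seq k).2.hx₂)
  have hYF : Y ∈ F :=
    hclF.mem_of_tendsto htendY (Eventually.of_forall fun k => (seq k).2.hy₁)
  have hY'F : Y' ∈ F :=
    hclF.mem_of_tendsto htendY' (Eventually.of_forall fun k => (seq k).2.hy₂)
  -- the two intervals collapse
  have hbigstep : ∀ (c : ℝ) (g : ℕ), (∀ k,
      (x1s k ≤ sK.e g ∧ sK.f g ≤ x2s k ∧ c ≤ sK.f g - sK.e g) ∨
      (y1s k ≤ sF.e g ∧ sF.f g ≤ y2s k ∧ c ≤ sF.f g - sF.e g)) → 0 < c → False := by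
    intro c g hg hc
    apply finite_steps_contra sK sF x1s x2s y1s y2s mono1 anti2 mono3 anti4 hc
    intro k
    rcases (hrel k).2.2.2.2 with hdone | ⟨n, hn⟩ | ⟨n, hn⟩
    · exfalso
      rcases hg k with h | h
      · have := sK.e_lt_f g
        have h2 := hdone.2.1
        have := hx1le k k
        linarith [h.1, h.2.1]
      · have := sF.e_lt_f g
        have h2 := hdone.2.2
        linarith [h.1, h.2.1]
    · -- I-split
      rcases hg k with h | h
      · exact Or.inl ⟨n, hn.2.1, hn.1, h.2.2.trans (hn.2.2.1 g h.1 h.2.1)⟩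
      · exact Or.inl ⟨n, hn.2.1, hn.1, h.2.2.trans (hn.2.2.2 g h.1 h.2.1)⟩
    · -- J-split
      rcases hg k with h | h
      · exact Or.inr ⟨n, hn.2.1, hn.1, h.2.2.trans (hn.2.2.1 g h.1 h.2.1)⟩
      · exact Or.inr ⟨n, hn.2.1, hn.1, h.2.2.trans (hn.2.2.2 g h.1 h.2.1)⟩
  have hXeq : X = X' := by
    by_contra hne
    have hlt : X < X' := lt_of_le_of_ne hXle hne
    obtain ⟨g, hg1, hg2⟩ : ∃ n, X ≤ sK.e n ∧ sK.f n ≤ X' := by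
      by_contra hng
      exact absurd (le_of_no_gap sK htdK hXK hX'K hng) (not_le.2 hlt)
    refine hbigstep (sK.f g - sK.e g) g (fun k => Or.inl ⟨?_, ?_, le_refl _⟩)
      (sub_pos.2 (sK.e_lt_f g))
    · exact (le_ciSup hb1 k).trans hg1
    · exact hg2.trans (ciInf_le hb2 k)
  have hYeq : Y = Y' := by
    by_contra hne
    have hlt : Y < Y' := lt_of_le_of_ne hYle hne
    obtain ⟨g, hg1, hg2⟩ : ∃ n, Y ≤ sF.e n ∧ sF.f n ≤ Y' := by
      by_contra hng
      exact absurd (le_of_no_gap sF htdF hYF hY'F hng) (not_le.2 hlt)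
    refine hbigstep (sF.f g - sF.e g) g (fun k => Or.inr ⟨?_, ?_, le_refl _⟩)
      (sub_pos.2 (sF.e_lt_f g))
    · exact (le_ciSup hb3 k).trans hg1
    · exact hg2.trans (ciInf_le hb4 k)
  -- pass to the limit in the corner inequalities
  have hmemXY : (X, Y) ∈ Icc (sInf K) (sSup K) ×ˢ Icc (sInf F) (sSup F) :=
    ⟨C_subset_Icc sK hXK, C_subset_Icc sF hYF⟩
  have htendP1 : Tendsto (fun k => ((x1s k, y1s k) : ℝ × ℝ)) atTop
      (𝓝[Icc (sInf K) (sSup K) ×ˢ Icc (sInf F) (sSup F)] (X, Y)) := by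
    apply tendsto_nhdsWithin_of_tendsto_nhds_of_eventually_within
    · exact htendX.prodMk_nhds htendY
    · exact Eventually.of_forall fun k =>
        ⟨C_subset_Icc sK (seq k).2.hx₁, C_subset_Icc sF (seq k).2.hy₁⟩
  have htendP2 : Tendsto (fun k => ((x2s k, y2s k) : ℝ × ℝ)) atTop
      (𝓝[Icc (sInf K) (sSup K) ×ˢ Icc (sInf F) (sSup F)] (X, Y)) := by
    apply tendsto_nhdsWithin_of_tendsto_nhds_of_eventually_within
    · rw [hXeq, hYeq]
      exact htendX'.prodMk_nhds htendY'
    · exact Eventually.of_forall fun k =>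
        ⟨C_subset_Icc sK (seq k).2.hx₂, C_subset_Icc sF (seq k).2.hy₂⟩
  have hS1 : Tendsto (fun k => S (x1s k, y1s k)) atTop (𝓝 (S (X, Y))) :=
    (hScont (X, Y) hmemXY).tendsto.comp htendP1
  have hS2 : Tendsto (fun k => S (x2s k, y2s k)) atTop (𝓝 (S (X, Y))) :=
    (hScont (X, Y) hmemXY).tendsto.comp htendP2
  have hle1 : S (X, Y) ≤ t :=
    le_of_tendsto hS1 (Eventually.of_forall fun k => (seq k).2.hT₁)
  have hle2 : t ≤ S (X, Y) :=
    ge_of_tendsto hS2 (Eventually.of_forall fun k => (seq k).2.hT₂)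
  exact ⟨X, hXK, Y, hYF, le_antisymm hle1 hle2⟩

end SHAux

end StableHallProof

open Set

/-- **Stable Hall Theorem.** Let `𝕂`, `𝔽` be Cantor sets satisfying the `ε`-stable gap
condition and jointly the `ε`-size condition, contained in an open set `U ⊆ ℝ²`
containing the rectangle `[min 𝕂, max 𝕂] × [min 𝔽, max 𝔽]`. If `S − S₀` is Lipschitz
on `U` with constant `L` satisfying `(1 − L)/(1 + L) > 1 − ε` (where `S₀` is the sum
function), then `S(𝕂 × 𝔽) = S([min 𝕂, max 𝕂] × [min 𝔽, max 𝔽])`. -/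
theorem stable_hall (ε : ℝ) (hε : 0 < ε) (K F : Set ℝ)
    (hK : IsCantorSet K) (hF : IsCantorSet F)
    (hKgap : HasStableGap ε K) (hFgap : HasStableGap ε F)
    (hsize : SizeCond ε K F)
    (U : Set (ℝ × ℝ)) (hU : IsOpen U)
    (hrect : Set.Icc (sInf K) (sSup K) ×ˢ Set.Icc (sInf F) (sSup F) ⊆ U)
    (S : ℝ × ℝ → ℝ) (L : ℝ) (hL : 0 ≤ L)
    (hLip : ∀ p ∈ U, ∀ q ∈ U,
      |(S p - (p.1 + p.2)) - (S q - (q.1 + q.2))| ≤ L * dist p q)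
    (hcond : 1 - ε < (1 - L) / (1 + L)) :
    S '' (K ×ˢ F) = S '' (Set.Icc (sInf K) (sSup K) ×ˢ Set.Icc (sInf F) (sSup F)) := by
  obtain ⟨sK, hgapK⟩ := hKgap
  obtain ⟨sF, hgapF⟩ := hFgap
  have hKcc : K ⊆ Icc (sInf K) (sSup K) := SHAux.C_subset_Icc sK
  have hFcc : F ⊆ Icc (sInf F) (sSup F) := SHAux.C_subset_Icc sF
  apply Set.Subset.antisymm
  · exact Set.image_mono (Set.prod_mono hKcc hFcc)
  intro t ht
  obtain ⟨p, hp, hpt⟩ := ht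
  have hε1 : 0 < 1 - ε := SHAux.one_sub_eps_pos sK hgapK
  have hLpos : (0:ℝ) < 1 + L := by linarith
  have h1L : 0 < 1 - L := by
    have h0 : (0:ℝ) < (1 - L) / (1 + L) := lt_trans (by linarith) hcond
    rcases div_pos_iff.mp h0 with ⟨ha, _⟩ | ⟨_, hb⟩
    · exact ha
    · linarith
  have hkey : (1+L)*(1-ε) ≤ 1-L := by
    have h1 := (lt_div_iff₀ hLpos).1 hcond
    nlinarith
  -- analytic facts
  have hmono : ∀ u v c d : ℝ, u ∈ Icc (sInf K) (sSup K) → v ∈ Icc (sInf K) (sSup K) →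
      c ∈ Icc (sInf F) (sSup F) → d ∈ Icc (sInf F) (sSup F) → u ≤ v → c ≤ d →
      S (u, c) ≤ S (v, d) := by
    intro u v c d hu hv hc hd huv hcd
    have h : |(S (v,d) - (v + d)) - (S (u,c) - (u + c))|
        ≤ L * dist ((v,d) : ℝ × ℝ) ((u,c) : ℝ × ℝ) :=
      hLip (v,d) (hrect ⟨hv, hd⟩) (u,c) (hrect ⟨hu, hc⟩)
    have hd2 : dist ((v,d) : ℝ × ℝ) ((u,c) : ℝ × ℝ) ≤ (v - u) + (d - c) := by
      rw [Prod.dist_eq]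
      refine max_le ?_ ?_
      · rw [Real.dist_eq, abs_of_nonneg (by linarith : (0:ℝ) ≤ v - u)]; linarith
      · rw [Real.dist_eq, abs_of_nonneg (by linarith : (0:ℝ) ≤ d - c)]; linarith
    have h3 : L * dist ((v,d) : ℝ × ℝ) ((u,c) : ℝ × ℝ) ≤ L * ((v-u)+(d-c)) :=
      mul_le_mul_of_nonneg_left hd2 hL
    rw [abs_le] at h
    nlinarith [h.1, h.2, h3]
  have hjump₁ : ∀ u v c d : ℝ, u ∈ Icc (sInf K) (sSup K) → v ∈ Icc (sInf K) (sSup K) →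
      c ∈ Icc (sInf F) (sSup F) → d ∈ Icc (sInf F) (sSup F) → u ≤ v → c ≤ d →
      (1+L)*(v-u) ≤ (1-L)*(d-c) → S (v, c) ≤ S (u, d) := by
    intro u v c d hu hv hc hd huv hcd hlen
    have h : |(S (v,c) - (v + c)) - (S (u,d) - (u + d))|
        ≤ L * dist ((v,c) : ℝ × ℝ) ((u,d) : ℝ × ℝ) :=
      hLip (v,c) (hrect ⟨hv, hc⟩) (u,d) (hrect ⟨hu, hd⟩)
    have hd2 : dist ((v,c) : ℝ × ℝ) ((u,d) : ℝ × ℝ) ≤ (v - u) + (d - c) := by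
      rw [Prod.dist_eq]
      refine max_le ?_ ?_
      · rw [Real.dist_eq, abs_of_nonneg (by linarith : (0:ℝ) ≤ v - u)]; linarith
      · rw [Real.dist_eq, abs_of_nonpos (by linarith : c - d ≤ 0)]; linarith
    have h3 : L * dist ((v,c) : ℝ × ℝ) ((u,d) : ℝ × ℝ) ≤ L * ((v-u)+(d-c)) :=
      mul_le_mul_of_nonneg_left hd2 hL
    rw [abs_le] at h
    nlinarith [h.1, h.2, h3]
  have hjump₂ : ∀ c d u v : ℝ, c ∈ Icc (sInf K) (sSup K) → d ∈ Icc (sInf K) (sSup K) →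
      u ∈ Icc (sInf F) (sSup F) → v ∈ Icc (sInf F) (sSup F) → c ≤ d → u ≤ v →
      (1+L)*(v-u) ≤ (1-L)*(d-c) → S (c, v) ≤ S (d, u) := by
    intro c d u v hc hd hu hv hcd huv hlen
    have h : |(S (c,v) - (c + v)) - (S (d,u) - (d + u))|
        ≤ L * dist ((c,v) : ℝ × ℝ) ((d,u) : ℝ × ℝ) :=
      hLip (c,v) (hrect ⟨hc, hv⟩) (d,u) (hrect ⟨hd, hu⟩)
    have hd2 : dist ((c,v) : ℝ × ℝ) ((d,u) : ℝ × ℝ) ≤ (d - c) + (v - u) := by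
      rw [Prod.dist_eq]
      refine max_le ?_ ?_
      · rw [Real.dist_eq, abs_of_nonpos (by linarith : c - d ≤ 0)]; linarith
      · rw [Real.dist_eq, abs_of_nonneg (by linarith : (0:ℝ) ≤ v - u)]; linarith
    have h3 : L * dist ((c,v) : ℝ × ℝ) ((d,u) : ℝ × ℝ) ≤ L * ((d-c)+(v-u)) :=
      mul_le_mul_of_nonneg_left hd2 hL
    rw [abs_le] at h
    nlinarith [h.1, h.2, h3]
  -- continuity of S on the rectangle
  have hdev : ContinuousOn (fun p : ℝ × ℝ => S p - (p.1 + p.2)) U := by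
    apply LipschitzOnWith.continuousOn (K := Real.toNNReal L)
    rw [lipschitzOnWith_iff_dist_le_mul]
    intro x hx y hy
    rw [Real.dist_eq, Real.coe_toNNReal L hL]
    exact hLip x hx y hy
  have hSU : ContinuousOn S U := by
    have hsum : ContinuousOn (fun p : ℝ × ℝ => p.1 + p.2) U :=
      (continuous_fst.add continuous_snd).continuousOn
    have heq : (fun p : ℝ × ℝ => (S p - (p.1 + p.2)) + (p.1 + p.2)) = S := by
      funext q; ring
    rw [← heq]
    exact hdev.add hsum
  have hScont : ContinuousOn S (Icc (sInf K) (sSup K) ×ˢ Icc (sInf F) (sSup F)) :=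
    hSU.mono hrect
  -- D bounds
  have hDF0 : (0:ℝ) ≤ sSup F - sInf F := sub_nonneg.2 (SHAux.hull_lt sF).le
  have hDK0 : (0:ℝ) ≤ sSup K - sInf K := sub_nonneg.2 (SHAux.hull_lt sK).le
  -- initial invariant
  have hIK : sInf K ∈ K := hK.2.1.sInf_mem hK.1
  have hSK : sSup K ∈ K := hK.2.1.sSup_mem hK.1
  have hIF : sInf F ∈ F := hF.2.1.sInf_mem hF.1
  have hSF : sSup F ∈ F := hF.2.1.sSup_mem hF.1
  have hSp : S (p.1, p.2) = S p := by rw [Prod.mk.eta]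
  have hinv0 : SHAux.Inv sK sF S t ε L ⟨sInf K, sSup K, sInf F, sSup F⟩ :=
    { hx12 := (SHAux.hull_lt sK).le
      hy12 := (SHAux.hull_lt sF).le
      hx₁ := hIK
      hx₂ := hSK
      hy₁ := hIF
      hy₂ := hSF
      hT₁ := by
        rw [← hpt, ← hSp]
        exact hmono (sInf K) p.1 (sInf F) p.2 (hKcc hIK) hp.1 (hFcc hIF) hp.2
          hp.1.1 hp.2.1
      hT₂ := by
        rw [← hpt, ← hSp]
        exact hmono p.1 (sSup K) p.2 (sSup F) hp.1 (hKcc hSK) hp.2 (hFcc hSF)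
          hp.1.2 hp.2.2
      hQI := by
        intro n _ _
        have hhole := hsize.1 _ (SHAux.gap_isHole sK n)
        rw [csSup_Ioo (sK.e_lt_f n), csInf_Ioo (sK.e_lt_f n)] at hhole
        calc (1+L)*(sK.f n - sK.e n) ≤ (1+L)*((1-ε)*(sSup F - sInf F)) :=
              mul_le_mul_of_nonneg_left hhole (by linarith)
          _ = ((1+L)*(1-ε))*(sSup F - sInf F) := by ring
          _ ≤ (1-L)*(sSup F - sInf F) := mul_le_mul_of_nonneg_right hkey hDF0
      hQJ := by
        intro n _ _
        have hhole := hsize.2 _ (SHAux.gap_isHole sF n)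
        rw [csSup_Ioo (sF.e_lt_f n), csInf_Ioo (sF.e_lt_f n)] at hhole
        calc (1+L)*(sF.f n - sF.e n) ≤ (1+L)*((1-ε)*(sSup K - sInf K)) :=
              mul_le_mul_of_nonneg_left hhole (by linarith)
          _ = ((1+L)*(1-ε))*(sSup K - sInf K) := by ring
          _ ≤ (1-L)*(sSup K - sInf K) := mul_le_mul_of_nonneg_right hkey hDK0
      hEI₁ := fun n _ _ => SHAux.end_left sK hgapK n
      hEI₂ := fun n _ _ => SHAux.end_right sK hgapK n
      hEJ₁ := fun n _ _ => SHAux.end_left sF hgapF n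
      hEJ₂ := fun n _ _ => SHAux.end_right sF hgapF n }
  obtain ⟨x, hx, y, hy, hxy⟩ := SHAux.key_lemma sK sF hgapK hgapF
    hK.2.2.2 hF.2.2.2 hK.2.1.isClosed hF.2.1.isClosed S t hL hkey
    hjump₁ hjump₂ hScont _ hinv0
  exact ⟨(x, y), ⟨hx, hy⟩, hxy⟩
end
end

section
/- (Hall's theorem on sums of Cantor sets) Fix ε > 0. Let 𝕂 and 𝔽 be Cantor sets in ℝ, each satisfying the ε-stable gap condition, and assume the pair (𝕂,𝔽) satisfies the ε-size condition. Then the sumset 𝕂 + 𝔽 := { x + y : x ∈ 𝕂, y ∈ 𝔽 } equals the whole interval [min 𝕂 + min 𝔽, max 𝕂 + max 𝔽]. -/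
noncomputable section

namespace SlowSubdivision

variable {C : Set ℝ} (s : SlowSubdivision C)

lemma a_le_b (n : ℕ) : s.a n ≤ s.b n :=
  (s.a_le_e n).trans ((s.e_lt_f n).le.trans (s.f_le_b n))

lemma e_le_b (n : ℕ) : s.e n ≤ s.b n := (s.e_lt_f n).le.trans (s.f_le_b n)

lemma a_le_f (n : ℕ) : s.a n ≤ s.f n := (s.a_le_e n).trans (s.e_lt_f n).le

lemma icc_subset (n : ℕ) : Set.Icc (s.a n) (s.b n) ⊆ s.level n := by
  rw [← s.component n]; exact connectedComponentIn_subset _ _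

lemma antitone {m n : ℕ} (h : m ≤ n) : s.level n ⊆ s.level m := by
  induction h with
  | refl => exact subset_rfl
  | step _ ih => exact (s.subset_succ _).trans ih

lemma gap_subset (n : ℕ) : Set.Ioo (s.e n) (s.f n) ⊆ Set.Icc (s.a n) (s.b n) :=
  fun _ hx => ⟨(s.a_le_e n).trans hx.1.le, hx.2.le.trans (s.f_le_b n)⟩

lemma mem_level_iff {n : ℕ} {x : ℝ} :
    x ∈ s.level n ↔ x ∈ Set.Icc (sInf C) (sSup C) ∧
      ∀ m, m < n → x ∉ Set.Ioo (s.e m) (s.f m) := by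
  induction n with
  | zero => simp [s.level_zero]
  | succ n ih =>
    rw [s.level_succ n]
    constructor
    · rintro ⟨hx, hgap⟩
      rw [ih] at hx
      refine ⟨hx.1, fun m hm => ?_⟩
      rcases Nat.lt_succ_iff_lt_or_eq.mp hm with h | h
      · exact hx.2 m h
      · exact h ▸ hgap
    · rintro ⟨h1, h2⟩
      exact ⟨ih.mpr ⟨h1, fun m hm => h2 m (hm.trans n.lt_succ_self)⟩, h2 n n.lt_succ_self⟩

lemma level_subset_Icc (n : ℕ) : s.level n ⊆ Set.Icc (sInf C) (sSup C) :=
  fun _ hx => (s.mem_level_iff.mp hx).1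

lemma gap_notMem_level {n m : ℕ} (h : n < m) {x : ℝ}
    (hx : x ∈ Set.Ioo (s.e n) (s.f n)) : x ∉ s.level m :=
  fun hmem => (s.mem_level_iff.mp hmem).2 n h hx

lemma isClosed_level (n : ℕ) : IsClosed (s.level n) := by
  induction n with
  | zero => rw [s.level_zero]; exact isClosed_Icc
  | succ n ih => rw [s.level_succ n]; exact ih.sdiff isOpen_Ioo

lemma isCompact_level (n : ℕ) : IsCompact (s.level n) :=
  isCompact_Icc.of_isClosed_subset (s.isClosed_level n) (s.level_subset_Icc n)

lemma subset_comp {n : ℕ} {x y w : ℝ} (h : Set.Icc x y ⊆ s.level n)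
    (hw : w ∈ Set.Icc x y) (hw' : w ∈ Set.Icc (s.a n) (s.b n)) :
    Set.Icc x y ⊆ Set.Icc (s.a n) (s.b n) := by
  have h1 : w ∈ connectedComponentIn (s.level n) (s.a n) := (s.component n) ▸ hw'
  have h2 := connectedComponentIn_eq h1
  have h3 : Set.Icc x y ⊆ connectedComponentIn (s.level n) w :=
    isPreconnected_Icc.subset_connectedComponentIn hw h
  rw [← h2, s.component n] at h3
  exact h3

lemma a_mem_level (n m : ℕ) : s.a n ∈ s.level m := by
  induction m with
  | zero => exact s.antitone (Nat.zero_le n) (s.icc_subset n ⟨le_refl _, s.a_le_b n⟩)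
  | succ m ih =>
    rcases le_or_gt (m+1) n with h | h
    · exact s.antitone h (s.icc_subset n ⟨le_refl _, s.a_le_b n⟩)
    · have hnm : n ≤ m := Nat.lt_succ_iff.mp h
      rw [s.level_succ m]
      refine ⟨ih, ?_⟩
      rintro ⟨h1, h2⟩
      have hsub : Set.Icc (s.e m) (s.a n) ⊆ s.level n := fun x hx =>
        s.antitone hnm (s.icc_subset m ⟨(s.a_le_e m).trans hx.1, hx.2.trans (h2.le.trans (s.f_le_b m))⟩)
      have h3 := s.subset_comp hsub ⟨h1.le, le_refl _⟩ ⟨le_refl _, s.a_le_b n⟩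
      exact absurd (h3 ⟨le_refl _, h1.le⟩).1 (not_le.mpr h1)

lemma b_mem_level (n m : ℕ) : s.b n ∈ s.level m := by
  induction m with
  | zero => exact s.antitone (Nat.zero_le n) (s.icc_subset n ⟨s.a_le_b n, le_refl _⟩)
  | succ m ih =>
    rcases le_or_gt (m+1) n with h | h
    · exact s.antitone h (s.icc_subset n ⟨s.a_le_b n, le_refl _⟩)
    · have hnm : n ≤ m := Nat.lt_succ_iff.mp h
      rw [s.level_succ m]
      refine ⟨ih, ?_⟩
      rintro ⟨h1, h2⟩
      have hsub : Set.Icc (s.b n) (s.f m) ⊆ s.level n := fun x hx =>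
        s.antitone hnm (s.icc_subset m ⟨((s.a_le_e m).trans h1.le).trans hx.1, hx.2.trans (s.f_le_b m)⟩)
      have h3 := s.subset_comp hsub ⟨le_refl _, h2.le⟩ ⟨s.a_le_b n, le_refl _⟩
      exact absurd (h3 ⟨h2.le, le_refl _⟩).2 (not_le.mpr h2)

lemma e_mem_level (n m : ℕ) : s.e n ∈ s.level m := by
  induction m with
  | zero => exact s.antitone (Nat.zero_le n) (s.icc_subset n ⟨s.a_le_e n, s.e_le_b n⟩)
  | succ m ih =>
    rcases le_or_gt (m+1) n with h | h
    · exact s.antitone h (s.icc_subset n ⟨s.a_le_e n, s.e_le_b n⟩)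
    · have hnm : n ≤ m := Nat.lt_succ_iff.mp h
      rw [s.level_succ m]
      refine ⟨ih, ?_⟩
      rintro ⟨h1, h2⟩
      rcases eq_or_lt_of_le hnm with rfl | hlt
      · exact absurd h1 (lt_irrefl _)
      · set w := (s.e n + min (s.f m) (s.f n)) / 2 with hw
        have hmin : s.e n < min (s.f m) (s.f n) := lt_min h2 (s.e_lt_f n)
        have hw1 : s.e n < w := by simp only [hw]; linarith
        have hw2 : w < s.f m := by
          have : w < min (s.f m) (s.f n) := by simp only [hw]; linarith
          exact this.trans_le (min_le_left _ _)
        have hw3 : w < s.f n := by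
          have : w < min (s.f m) (s.f n) := by simp only [hw]; linarith
          exact this.trans_le (min_le_right _ _)
        have hwlev : w ∈ s.level m :=
          s.icc_subset m ⟨(s.a_le_e m).trans (h1.le.trans hw1.le), hw2.le.trans (s.f_le_b m)⟩
        have hwlev' : w ∈ s.level (n+1) := s.antitone hlt hwlev
        exact s.gap_notMem_level (n.lt_succ_self) ⟨hw1, hw3⟩ hwlev'

lemma f_mem_level (n m : ℕ) : s.f n ∈ s.level m := by
  induction m with
  | zero => exact s.antitone (Nat.zero_le n) (s.icc_subset n ⟨s.a_le_f n, s.f_le_b n⟩)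
  | succ m ih =>
    rcases le_or_gt (m+1) n with h | h
    · exact s.antitone h (s.icc_subset n ⟨s.a_le_f n, s.f_le_b n⟩)
    · have hnm : n ≤ m := Nat.lt_succ_iff.mp h
      rw [s.level_succ m]
      refine ⟨ih, ?_⟩
      rintro ⟨h1, h2⟩
      rcases eq_or_lt_of_le hnm with rfl | hlt
      · exact absurd h2 (lt_irrefl _)
      · set w := (max (s.e m) (s.e n) + s.f n) / 2 with hw
        have hmax : max (s.e m) (s.e n) < s.f n := max_lt h1 (s.e_lt_f n)
        have hw1 : w < s.f n := by simp only [hw]; linarith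
        have hw2 : s.e m < w := by
          have : max (s.e m) (s.e n) < w := by simp only [hw]; linarith
          exact (le_max_left _ _).trans_lt this
        have hw3 : s.e n < w := by
          have : max (s.e m) (s.e n) < w := by simp only [hw]; linarith
          exact (le_max_right _ _).trans_lt this
        have hwlev : w ∈ s.level m :=
          s.icc_subset m ⟨(s.a_le_e m).trans hw2.le, (hw1.le.trans h2.le).trans (s.f_le_b m)⟩
        have hwlev' : w ∈ s.level (n+1) := s.antitone hlt hwlev
        exact s.gap_notMem_level (n.lt_succ_self) ⟨hw3, hw1⟩ hwlev'

lemma gap_eq {N : ℕ} {q p : ℝ} (hq : q ∈ s.level N) (hp : p ∈ s.level N) (hqp : q < p)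
    (hgap : ∀ x, x ∈ Set.Ioo q p → x ∉ s.level N) :
    ∃ m, m < N ∧ s.e m = q ∧ s.f m = p := by
  set w := (q + p) / 2 with hwdef
  have hw : w ∈ Set.Ioo q p := ⟨by simp only [hwdef]; linarith, by simp only [hwdef]; linarith⟩
  have hw2 : w ∉ s.level N := hgap w hw
  have hwIcc : w ∈ Set.Icc (sInf C) (sSup C) := by
    have h1 := (s.mem_level_iff.mp hq).1
    have h2 := (s.mem_level_iff.mp hp).1
    exact ⟨h1.1.trans hw.1.le, hw.2.le.trans h2.2⟩
  rw [s.mem_level_iff] at hw2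
  push_neg at hw2
  obtain ⟨m, hm, hwm⟩ := hw2 hwIcc
  have hem : s.e m ∈ s.level N := s.e_mem_level m N
  have hfm : s.f m ∈ s.level N := s.f_mem_level m N
  have h1 : s.e m ≤ q := by
    by_contra hcon; push_neg at hcon
    exact hgap _ ⟨hcon, hwm.1.trans hw.2⟩ hem
  have h2 : p ≤ s.f m := by
    by_contra hcon; push_neg at hcon
    exact hgap _ ⟨hw.1.trans hwm.2, hcon⟩ hfm
  have h3 : s.e m = q := by
    rcases eq_or_lt_of_le h1 with h | h
    · exact h
    · exact absurd (s.antitone (Nat.succ_le_of_lt hm) hq)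
        (s.gap_notMem_level (Nat.lt_succ_self m) ⟨h, lt_of_lt_of_le hqp h2⟩)
  have h4 : s.f m = p := by
    rcases eq_or_lt_of_le h2 with h | h
    · exact h.symm
    · exact absurd (s.antitone (Nat.succ_le_of_lt hm) hp)
        (s.gap_notMem_level (Nat.lt_succ_self m) ⟨lt_of_le_of_lt h1 hqp, h⟩)
  exact ⟨m, hm, h3, h4⟩

end SlowSubdivision
lemma connectedComponentIn_neg (S : Set ℝ) (x : ℝ) :
    connectedComponentIn (-S) (-x) = -(connectedComponentIn S x) := by
  by_cases hx : x ∈ S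
  · apply Set.Subset.antisymm
    · intro y hy
      rw [Set.mem_neg]
      have h1 : IsPreconnected (Neg.neg '' connectedComponentIn (-S) (-x)) :=
        isPreconnected_connectedComponentIn.image _ continuous_neg.continuousOn
      have h2 : Neg.neg '' connectedComponentIn (-S) (-x) ⊆ S := by
        rintro z ⟨w, hw, rfl⟩
        exact Set.mem_neg.mp (connectedComponentIn_subset _ _ hw)
      have h3 : x ∈ Neg.neg '' connectedComponentIn (-S) (-x) :=
        ⟨-x, mem_connectedComponentIn (by rwa [Set.mem_neg, neg_neg]), by rw [neg_neg]⟩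
      exact h1.subset_connectedComponentIn h3 h2 ⟨y, hy, rfl⟩
    · intro y hy
      rw [Set.mem_neg] at hy
      have h1 : IsPreconnected (Neg.neg '' connectedComponentIn S x) :=
        isPreconnected_connectedComponentIn.image _ continuous_neg.continuousOn
      have h2 : Neg.neg '' connectedComponentIn S x ⊆ -S := by
        rintro z ⟨w, hw, rfl⟩
        rw [Set.mem_neg, neg_neg]
        exact connectedComponentIn_subset _ _ hw
      have h3 : -x ∈ Neg.neg '' connectedComponentIn S x :=
        ⟨x, mem_connectedComponentIn hx, rfl⟩
      exact h1.subset_connectedComponentIn h3 h2 ⟨-y, hy, neg_neg y⟩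
  · rw [connectedComponentIn_eq_empty hx,
      connectedComponentIn_eq_empty (show -x ∉ -S by rwa [Set.mem_neg, neg_neg])]
    ext z; simp [Set.mem_neg]

namespace SlowSubdivision

variable {C : Set ℝ} (s : SlowSubdivision C)

lemma sSup_neg_set (A : Set ℝ) : sSup (-A) = -sInf A := by
  have := Real.sInf_def A; linarith

lemma sInf_neg_set (A : Set ℝ) : sInf (-A) = -sSup A := by
  have := Real.sInf_def (-A); rw [neg_neg] at this; linarith

def mirror (s : SlowSubdivision C) : SlowSubdivision (-C) where
  level n := -(s.level n)
  subset_succ n _ hx := s.subset_succ n hx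
  level_zero := by
    show -(s.level 0) = _
    rw [s.level_zero, Set.neg_Icc, sInf_neg_set, sSup_neg_set]
  pieces n := by
    obtain ⟨I, h1, h2, h3⟩ := s.pieces n
    refine ⟨fun i => (-(I i).2, -(I i).1), fun i => neg_le_neg (h1 i), fun i j hij => ?_, ?_⟩
    · rw [show Set.Icc (-(I i).2) (-(I i).1) = -Set.Icc (I i).1 (I i).2 from (Set.neg_Icc _ _).symm,
        show Set.Icc (-(I j).2) (-(I j).1) = -Set.Icc (I j).1 (I j).2 from (Set.neg_Icc _ _).symm]
      exact Set.disjoint_left.mpr fun x hx hx' =>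
        Set.disjoint_left.mp (h2 i j hij) (Set.mem_neg.mp hx) (Set.mem_neg.mp hx')
    · show -(s.level n) = ⋃ i, Set.Icc (-(I i).2) (-(I i).1)
      rw [h3]; ext x
      simp only [Set.mem_neg, Set.mem_iUnion, Set.mem_Icc]
      constructor
      · rintro ⟨i, hi⟩; exact ⟨i, by constructor <;> linarith [hi.1, hi.2]⟩
      · rintro ⟨i, hi⟩; exact ⟨i, by constructor <;> linarith [hi.1, hi.2]⟩
  a n := -(s.b n)
  e n := -(s.f n)
  f n := -(s.e n)
  b n := -(s.a n)
  a_le_e n := neg_le_neg (s.f_le_b n)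
  e_lt_f n := neg_lt_neg (s.e_lt_f n)
  f_le_b n := neg_le_neg (s.a_le_e n)
  component n := by
    show connectedComponentIn (-(s.level n)) (-(s.b n)) = Set.Icc (-(s.b n)) (-(s.a n))
    have h := s.component n
    have hb : s.b n ∈ connectedComponentIn (s.level n) (s.a n) := h ▸ ⟨s.a_le_b n, le_refl _⟩
    have h2 : connectedComponentIn (s.level n) (s.b n) = Set.Icc (s.a n) (s.b n) :=
      (connectedComponentIn_eq hb).symm.trans h
    rw [connectedComponentIn_neg, h2, Set.neg_Icc]
  level_succ n := by
    show -(s.level (n+1)) = -(s.level n) \ Set.Ioo (-(s.f n)) (-(s.e n))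
    rw [s.level_succ n]; ext x
    simp only [Set.mem_neg, Set.mem_diff, Set.mem_Ioo]
    constructor
    · rintro ⟨h1, h2⟩
      exact ⟨h1, fun hc => h2 ⟨by linarith [hc.2], by linarith [hc.1]⟩⟩
    · rintro ⟨h1, h2⟩
      exact ⟨h1, fun hc => h2 ⟨by linarith [hc.2], by linarith [hc.1]⟩⟩
  iInter_level := by
    show ⋂ n, -(s.level n) = -C
    ext x
    simp only [Set.mem_iInter, Set.mem_neg, ← s.iInter_level]

lemma mirror_level (n : ℕ) : (s.mirror).level n = -(s.level n) := rfl
lemma mirror_a (n : ℕ) : (s.mirror).a n = -(s.b n) := rfl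
lemma mirror_e (n : ℕ) : (s.mirror).e n = -(s.f n) := rfl
lemma mirror_f (n : ℕ) : (s.mirror).f n = -(s.e n) := rfl
lemma mirror_b (n : ℕ) : (s.mirror).b n = -(s.a n) := rfl

def pivR (s : SlowSubdivision C) (N : ℕ) (γ : ℝ) : ℝ := sSup (s.level N ∩ Set.Iic γ)
def pivL (s : SlowSubdivision C) (N : ℕ) (β : ℝ) : ℝ := sInf (s.level N ∩ Set.Ici β)

lemma neg_inter_Iic (A : Set ℝ) (c : ℝ) : (-A) ∩ Set.Iic (-c) = -(A ∩ Set.Ici c) := by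
  ext x
  simp only [Set.mem_inter_iff, Set.mem_neg, Set.mem_Iic, Set.mem_Ici]
  constructor
  · rintro ⟨h1, h2⟩; exact ⟨h1, by linarith⟩
  · rintro ⟨h1, h2⟩; exact ⟨h1, by linarith⟩

lemma neg_inter_Ici (A : Set ℝ) (c : ℝ) : (-A) ∩ Set.Ici (-c) = -(A ∩ Set.Iic c) := by
  ext x
  simp only [Set.mem_inter_iff, Set.mem_neg, Set.mem_Iic, Set.mem_Ici]
  constructor
  · rintro ⟨h1, h2⟩; exact ⟨h1, by linarith⟩
  · rintro ⟨h1, h2⟩; exact ⟨h1, by linarith⟩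

lemma pivR_mirror (N : ℕ) (β : ℝ) : pivR (s.mirror) N (-β) = -(pivL s N β) := by
  unfold pivR pivL
  rw [mirror_level, neg_inter_Iic, sSup_neg_set]

lemma pivL_mirror (N : ℕ) (γ : ℝ) : pivL (s.mirror) N (-γ) = -(pivR s N γ) := by
  unfold pivR pivL
  rw [mirror_level, neg_inter_Ici, sInf_neg_set]

def PtR (s : SlowSubdivision C) (N : ℕ) (β γ : ℝ) (m : ℕ) : Prop :=
  (∀ z, Set.Icc (pivR s N γ) z ⊆ s.level m → z ≤ pivR s N γ) ∧
  (∀ z, Set.Icc z (pivR s N γ) ⊆ s.level m → β < z)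

def PtL (s : SlowSubdivision C) (N : ℕ) (β γ : ℝ) (m : ℕ) : Prop :=
  (∀ z, Set.Icc z (pivL s N β) ⊆ s.level m → pivL s N β ≤ z) ∧
  (∀ z, Set.Icc (pivL s N β) z ⊆ s.level m → z < γ)

lemma icc_neg_subset_neg {A : Set ℝ} {x y : ℝ} (h : Set.Icc x y ⊆ A) :
    Set.Icc (-y) (-x) ⊆ -A := by
  rw [← Set.neg_Icc]
  intro z hz
  rw [Set.mem_neg]
  exact h (Set.mem_neg.mp hz)

lemma ptR_mirror_iff (N : ℕ) (β γ : ℝ) (m : ℕ) :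
    PtR (s.mirror) N (-γ) (-β) m ↔ PtL s N β γ m := by
  unfold PtR PtL
  rw [pivR_mirror, mirror_level]
  constructor
  · rintro ⟨c1, c2⟩
    constructor
    · intro z hz
      have := c1 (-z) (icc_neg_subset_neg hz)
      linarith
    · intro z hz
      have := c2 (-z) (icc_neg_subset_neg hz)
      linarith
  · rintro ⟨c1, c2⟩
    constructor
    · intro z hz
      have hz' : Set.Icc (-z) (pivL s N β) ⊆ s.level m := by
        have := icc_neg_subset_neg hz
        rwa [neg_neg, neg_neg] at this
      have := c1 (-z) hz'
      linarith
    · intro z hz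
      have hz' : Set.Icc (pivL s N β) (-z) ⊆ s.level m := by
        have := icc_neg_subset_neg hz
        rwa [neg_neg, neg_neg] at this
      have := c2 (-z) hz'
      linarith

lemma ptL_mirror_iff (N : ℕ) (β γ : ℝ) (m : ℕ) :
    PtL (s.mirror) N (-γ) (-β) m ↔ PtR s N β γ m := by
  unfold PtR PtL
  rw [pivL_mirror, mirror_level]
  constructor
  · rintro ⟨c1, c2⟩
    constructor
    · intro z hz
      have := c1 (-z) (icc_neg_subset_neg hz)
      linarith
    · intro z hz
      have := c2 (-z) (icc_neg_subset_neg hz)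
      linarith
  · rintro ⟨c1, c2⟩
    constructor
    · intro z hz
      have hz' : Set.Icc (pivR s N γ) (-z) ⊆ s.level m := by
        have := icc_neg_subset_neg hz
        rwa [neg_neg, neg_neg] at this
      have := c1 (-z) hz'
      linarith
    · intro z hz
      have hz' : Set.Icc (-z) (pivR s N γ) ⊆ s.level m := by
        have := icc_neg_subset_neg hz
        rwa [neg_neg, neg_neg] at this
      have := c2 (-z) hz'
      linarith

end SlowSubdivision
namespace SlowSubdivision

variable {C : Set ℝ} (s : SlowSubdivision C)

lemma ptR_N (N : ℕ) (α β γ δ : ℝ)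
    (h1 : ∀ x ∈ s.level N, x ∉ Set.Icc α β)
    (h2 : ∀ x ∈ s.level N, x ∉ Set.Icc γ δ)
    (h3 : ∃ x ∈ s.level N, x ∈ Set.Ioo β γ)
    (hαβ : α < β) (hγδ : γ < δ) :
    PtR s N β γ N := by
  obtain ⟨x₀, hx₀N, hx₀⟩ := h3
  have hcpt : IsCompact (s.level N ∩ Set.Iic γ) := (s.isCompact_level N).inter_right isClosed_Iic
  have hne : (s.level N ∩ Set.Iic γ).Nonempty := ⟨x₀, hx₀N, hx₀.2.le⟩
  have hpmem : pivR s N γ ∈ s.level N ∩ Set.Iic γ := hcpt.sSup_mem hne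
  have hpmax : ∀ x ∈ s.level N, x ≤ γ → x ≤ pivR s N γ :=
    fun x hx hxγ => le_csSup hcpt.bddAbove ⟨hx, hxγ⟩
  have hpγ : pivR s N γ < γ := lt_of_le_of_ne hpmem.2
    (fun hcon => h2 _ hpmem.1 (by rw [hcon]; exact ⟨le_refl _, hγδ.le⟩))
  have hpβ : β < pivR s N γ := lt_of_lt_of_le hx₀.1 (hpmax x₀ hx₀N hx₀.2.le)
  constructor
  · intro z hz
    by_contra hzp; push_neg at hzp
    have hzN : z ∈ s.level N := hz ⟨hzp.le, le_refl _⟩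
    have hγz : γ ≤ z := by
      by_contra hc; push_neg at hc
      exact absurd (hpmax z hzN hc.le) (not_le.mpr hzp)
    exact h2 γ (hz ⟨hpγ.le, hγz⟩) ⟨le_refl _, hγδ.le⟩
  · intro z hz
    by_contra hzβ; push_neg at hzβ
    exact h1 β (hz ⟨hzβ, hpβ.le⟩) ⟨hαβ.le, le_refl _⟩

lemma sideA {lam : ℝ} (hlam0 : 0 < lam) (hlam1 : lam < 1)
    (hgc : ∀ n, s.f n - s.e n < lam * (s.e n - s.a n) ∧ s.f n - s.e n < lam * (s.b n - s.f n))
    (N : ℕ) (α β γ δ : ℝ)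
    (h1 : ∀ x ∈ s.level N, x ∉ Set.Icc α β)
    (h2 : ∀ x ∈ s.level N, x ∉ Set.Icc γ δ)
    (h3 : ∃ x ∈ s.level N, x ∈ Set.Ioo β γ)
    (hβγ : β < γ)
    (hL : γ - β < lam * (β - α))
    (hR : γ - β < lam * (δ - γ))
    (hhull : γ - β ≤ lam * (sSup C - sInf C))
    (ms ms' : ℕ)
    (hms : PtR s N β γ ms) (hmsmin : ∀ k, k < ms → ¬ PtR s N β γ k)
    (hms' : PtL s N β γ ms') (hmsN : ms ≤ N) :
    ms < ms' := by
  have hβγ0 : (0:ℝ) < γ - β := by linarith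
  have hαβ : α < β := by nlinarith
  have hγδ : γ < δ := by nlinarith
  obtain ⟨x₀, hx₀N, hx₀⟩ := h3
  have hcpt : IsCompact (s.level N ∩ Set.Iic γ) := (s.isCompact_level N).inter_right isClosed_Iic
  have hne : (s.level N ∩ Set.Iic γ).Nonempty := ⟨x₀, hx₀N, hx₀.2.le⟩
  have hpmem : pivR s N γ ∈ s.level N ∩ Set.Iic γ := hcpt.sSup_mem hne
  have hpmax : ∀ x ∈ s.level N, x ≤ γ → x ≤ pivR s N γ :=
    fun x hx hxγ => le_csSup hcpt.bddAbove ⟨hx, hxγ⟩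
  set p := pivR s N γ with hpdef
  have hms1 : ∀ z, Set.Icc p z ⊆ s.level ms → z ≤ p := hms.1
  have hms2 : ∀ z, Set.Icc z p ⊆ s.level ms → β < z := hms.2
  have hpN : p ∈ s.level N := hpmem.1
  have hpγ : p < γ := lt_of_le_of_ne hpmem.2
    (fun hcon => h2 _ hpmem.1 (by rw [hcon]; exact ⟨le_refl _, hγδ.le⟩))
  have hpβ : β < p := lt_of_lt_of_le hx₀.1 (hpmax x₀ hx₀N hx₀.2.le)
  have hfreeR : ∀ x ∈ s.level N, p < x → δ < x := by
    intro x hx hpx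
    by_contra hxd; push_neg at hxd
    rcases le_or_gt x γ with hc | hc
    · exact absurd (hpmax x hx hc) (not_le.mpr hpx)
    · exact h2 x hx ⟨hc.le, hxd⟩
  have hms0 : ms ≠ 0 := by
    intro h0
    rw [h0] at hms1 hms2
    have hIcc0 : s.level 0 = Set.Icc (sInf C) (sSup C) := s.level_zero
    have hpIcc : p ∈ Set.Icc (sInf C) (sSup C) := s.level_subset_Icc N hpN
    have hsup : sSup C ≤ p := hms1 (sSup C) (by
      rw [hIcc0]; intro y hy; exact ⟨hpIcc.1.trans hy.1, hy.2⟩)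
    have hinf : β < sInf C := hms2 (sInf C) (by
      rw [hIcc0]; intro y hy; exact ⟨hy.1, hy.2.trans hpIcc.2⟩)
    nlinarith [hpIcc.1, hpIcc.2]
  obtain ⟨M1, rfl⟩ : ∃ M1, ms = M1 + 1 := ⟨ms - 1, (Nat.succ_pred_eq_of_ne_zero hms0).symm⟩
  have hnPtM1 : ¬ PtR s N β γ M1 := hmsmin M1 (Nat.lt_succ_self M1)
  have hlev_ms : s.level (M1+1) = s.level M1 \ Set.Ioo (s.e M1) (s.f M1) := s.level_succ M1
  have hNms : s.level N ⊆ s.level (M1+1) := s.antitone hmsN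
  have hgc1 := (hgc M1).1
  have hgc2 := (hgc M1).2
  have hEF := s.e_lt_f M1
  have haE := s.a_le_e M1
  have hfB := s.f_le_b M1
  have hfN : s.f M1 ∈ s.level N := s.f_mem_level M1 N
  have heN : s.e M1 ∈ s.level N := s.e_mem_level M1 N
  have haN : s.a M1 ∈ s.level N := s.a_mem_level M1 N
  by_cases hcR : ∃ z, p < z ∧ Set.Icc p z ⊆ s.level M1
  · exfalso
    obtain ⟨z, hpz, hz⟩ := hcR
    have hnot : ¬ Set.Icc p z ⊆ s.level (M1+1) :=
      fun hsub => absurd (hms1 z hsub) (not_le.mpr hpz)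
    obtain ⟨w, hw1, hw2⟩ := Set.not_subset.mp hnot
    have hwgap : w ∈ Set.Ioo (s.e M1) (s.f M1) := by
      rw [hlev_ms] at hw2
      by_contra hcon
      exact hw2 ⟨hz hw1, hcon⟩
    have hplev : p ∈ s.level (M1+1) := hNms hpN
    have hpe : p ≤ s.e M1 := by
      by_contra hcon; push_neg at hcon
      rw [hlev_ms] at hplev
      exact hplev.2 ⟨hcon, lt_of_le_of_lt hw1.1 hwgap.2⟩
    have hee : s.e M1 = p := by
      refine le_antisymm (hms1 (s.e M1) ?_) hpe
      intro y hy
      rw [hlev_ms]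
      refine ⟨hz ⟨hy.1, hy.2.trans (hwgap.1.le.trans hw1.2)⟩, ?_⟩
      rintro ⟨hc1, _⟩
      exact absurd hy.2 (not_le.mpr hc1)
    have hwab : w ∈ Set.Icc (s.a M1) (s.b M1) := s.gap_subset M1 hwgap
    have hsub2 := s.subset_comp hz hw1 hwab
    have hA : s.a M1 ≤ p := (hsub2 ⟨le_refl _, hpz.le⟩).1
    have hApsub : Set.Icc (s.a M1) p ⊆ s.level (M1+1) := by
      intro y hy
      rw [hlev_ms]
      refine ⟨s.icc_subset M1 ⟨hy.1, hy.2.trans (hee ▸ s.e_le_b M1)⟩, ?_⟩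
      rintro ⟨hc1, _⟩
      exact absurd (hee ▸ hc1) (not_lt.mpr hy.2)
    have hAβ : β < s.a M1 := hms2 (s.a M1) hApsub
    have hδf : δ < s.f M1 := hfreeR _ hfN (hee ▸ hEF)
    rw [hee] at hgc1
    have hpa : p - s.a M1 < γ - β := by linarith
    have k1 : s.f M1 - p < lam * (γ - β) := hgc1.trans (mul_lt_mul_of_pos_left hpa hlam0)
    have k2 : δ - γ < lam * (γ - β) := by linarith
    nlinarith [k2, hR, hβγ0, hlam0, hlam1]
  · push_neg at hcR
    have hclause1M1 : ∀ z, Set.Icc p z ⊆ s.level M1 → z ≤ p := by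
      intro z hz
      by_contra hcon; push_neg at hcon
      exact hcR z hcon hz
    obtain ⟨z, hz, hzβ⟩ : ∃ z, Set.Icc z p ⊆ s.level M1 ∧ z ≤ β := by
      by_contra hcon; push_neg at hcon
      exact hnPtM1 ⟨hclause1M1, hcon⟩
    have hnot : ¬ Set.Icc z p ⊆ s.level (M1+1) :=
      fun hsub => absurd (hms2 z hsub) (not_lt.mpr hzβ)
    obtain ⟨w, hw1, hw2⟩ := Set.not_subset.mp hnot
    have hwgap : w ∈ Set.Ioo (s.e M1) (s.f M1) := by
      rw [hlev_ms] at hw2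
      by_contra hcon
      exact hw2 ⟨hz hw1, hcon⟩
    have hwab := s.gap_subset M1 hwgap
    have hsub2 := s.subset_comp hz hw1 hwab
    have hzp : z ≤ p := hw1.1.trans hw1.2
    have hAz : s.a M1 ≤ z := (hsub2 ⟨le_refl _, hzp⟩).1
    have hpB : p ≤ s.b M1 := (hsub2 ⟨hzp, le_refl _⟩).2
    have hBp : s.b M1 = p := by
      refine le_antisymm (hclause1M1 (s.b M1) ?_) hpB
      intro y hy
      exact s.icc_subset M1 ⟨(hAz.trans hzp).trans hy.1, hy.2⟩
    have hfp : s.f M1 ≤ p := hBp ▸ hfB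
    have hzf : z < s.f M1 := lt_of_le_of_lt hw1.1 hwgap.2
    have hfpsub : Set.Icc (s.f M1) p ⊆ s.level (M1+1) := by
      intro y hy
      rw [hlev_ms]
      refine ⟨hz ⟨hzf.le.trans hy.1, hy.2⟩, ?_⟩
      rintro ⟨_, hc2⟩
      exact absurd hy.1 (not_le.mpr hc2)
    have hFβ : β < s.f M1 := hms2 _ hfpsub
    have hfγ : s.f M1 < γ := lt_of_le_of_lt hfp hpγ
    have hk1 : s.f M1 - s.e M1 < lam * (γ - β) := by
      have h' : s.b M1 - s.f M1 < γ - β := by rw [hBp]; linarith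
      exact hgc2.trans (mul_lt_mul_of_pos_left h' hlam0)
    have hβα0 : (0:ℝ) < β - α := by linarith
    have t1 : lam * (γ - β) < lam * (lam * (β - α)) := mul_lt_mul_of_pos_left hL hlam0
    have t2 : lam * (lam * (β - α)) < β - α := by nlinarith
    have hEα : α < s.e M1 := by linarith
    have hEβ : β < s.e M1 := by
      by_contra hcon; push_neg at hcon
      exact h1 _ heN ⟨hEα.le, hcon⟩
    have hAα : s.a M1 < α := by
      by_contra hcon; push_neg at hcon
      exact h1 _ haN ⟨hcon, hAz.trans hzβ⟩
    have hcptL : IsCompact (s.level N ∩ Set.Iic α) := (s.isCompact_level N).inter_right isClosed_Iic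
    have hneL : (s.level N ∩ Set.Iic α).Nonempty := ⟨s.a M1, haN, hAα.le⟩
    set q := sSup (s.level N ∩ Set.Iic α) with hqdef
    have hqmem : q ∈ s.level N ∩ Set.Iic α := hcptL.sSup_mem hneL
    have hqmax : ∀ x ∈ s.level N, x ≤ α → x ≤ q :=
      fun x hx hxα => le_csSup hcptL.bddAbove ⟨hx, hxα⟩
    have hcptR : IsCompact (s.level N ∩ Set.Ici β) := (s.isCompact_level N).inter_right isClosed_Ici
    have hneR : (s.level N ∩ Set.Ici β).Nonempty := ⟨p, hpN, hpβ.le⟩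
    have hp'mem : pivL s N β ∈ s.level N ∩ Set.Ici β := hcptR.sInf_mem hneR
    have hp'min : ∀ x ∈ s.level N, β ≤ x → pivL s N β ≤ x :=
      fun x hx hxβ => csInf_le hcptR.bddBelow ⟨hx, hxβ⟩
    set p' := pivL s N β with hp'def
    have hp'β : β < p' := lt_of_le_of_ne hp'mem.2
      (fun hcon => h1 _ hp'mem.1 (by rw [← hcon]; exact ⟨hαβ.le, le_refl _⟩))
    have hp'E : p' ≤ s.e M1 := hp'min _ heN hEβ.le
    have hqα : q ≤ α := hqmem.2
    have hqp' : q < p' := by linarith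
    have hgapqp' : ∀ x, x ∈ Set.Ioo q p' → x ∉ s.level N := by
      intro x hx hxN
      rcases le_or_gt x α with hc | hc
      · exact absurd (hqmax x hxN hc) (not_le.mpr hx.1)
      rcases le_or_gt x β with hc2 | hc2
      · exact h1 x hxN ⟨hc.le, hc2⟩
      · exact absurd (hp'min x hxN hc2.le) (not_le.mpr hx.2)
    obtain ⟨mL, hmLN, hemL, hfmL⟩ := s.gap_eq hqmem.1 hp'mem.1 hqp' hgapqp'
    have hqA : s.a M1 ≤ q := hqmax _ haN hAα.le
    have hIccAE : Set.Icc (s.a M1) (s.e M1) ⊆ s.level (M1+1) := by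
      intro y hy
      rw [hlev_ms]
      refine ⟨s.icc_subset M1 ⟨hy.1, hy.2.trans (s.e_le_b M1)⟩, ?_⟩
      rintro ⟨hc1, _⟩
      exact absurd hy.2 (not_le.mpr hc1)
    have hmsmL : M1 + 1 ≤ mL := by
      by_contra hcon; push_neg at hcon
      have hw'mem : (q + p') / 2 ∈ Set.Ioo (s.e mL) (s.f mL) := by
        rw [hemL, hfmL]; exact ⟨by linarith, by linarith⟩
      have hw'lev : (q + p') / 2 ∈ s.level (M1+1) :=
        hIccAE ⟨by linarith, by linarith⟩
      exact s.gap_notMem_level hcon hw'mem hw'lev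
    have hfinal : ∀ m, m ≤ mL → ¬ PtL s N β γ m := by
      intro m hm hPt
      have hIccqp : Set.Icc q p' ⊆ s.level m := by
        intro y hy
        rcases eq_or_lt_of_le hy.1 with hl | hl
        · rw [← hl, ← hemL]; exact s.e_mem_level mL m
        rcases eq_or_lt_of_le hy.2 with hr | hr
        · rw [hr, ← hfmL]; exact s.f_mem_level mL m
        · exact s.antitone hm (s.icc_subset mL (s.gap_subset mL (by rw [hemL, hfmL]; exact ⟨hl, hr⟩)))
      exact absurd (hPt.1 q hIccqp) (not_le.mpr hqp')
    by_contra hfin; push_neg at hfin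
    exact hfinal ms' (le_trans hfin hmsmL) hms'

end SlowSubdivision
namespace SlowSubdivision

variable {C : Set ℝ} (s : SlowSubdivision C)

lemma mem_C_of_mem_levels {x : ℝ} (h : ∀ m, x ∈ s.level m) : x ∈ C :=
  (Set.ext_iff.mp s.iInter_level x).mp (Set.mem_iInter.mpr h)

lemma C_subset_level (m : ℕ) : C ⊆ s.level m := fun x hx =>
  Set.mem_iInter.mp ((Set.ext_iff.mp s.iInter_level x).mpr hx) m

lemma e_mem_C (n : ℕ) : s.e n ∈ C := s.mem_C_of_mem_levels (fun m => s.e_mem_level n m)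

lemma f_mem_C (n : ℕ) : s.f n ∈ C := s.mem_C_of_mem_levels (fun m => s.f_mem_level n m)

end SlowSubdivision

open SlowSubdivision in
lemma sum_step {CK CF : Set ℝ} (s : SlowSubdivision CK) (σ : SlowSubdivision CF)
    {lam : ℝ} (hlam0 : 0 < lam) (hlam1 : lam < 1)
    (hgcs : ∀ n, s.f n - s.e n < lam * (s.e n - s.a n) ∧ s.f n - s.e n < lam * (s.b n - s.f n))
    (hgcσ : ∀ n, σ.f n - σ.e n < lam * (σ.e n - σ.a n) ∧ σ.f n - σ.e n < lam * (σ.b n - σ.f n))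
    (N M : ℕ) (t : ℝ)
    (hsize : σ.f M - σ.e M ≤ lam * (sSup CK - sInf CK))
    (hin : ∃ x ∈ s.level N, ∃ y ∈ σ.level M, x + y = t) :
    ∃ x ∈ s.level N, ∃ y ∈ σ.level (M + 1), x + y = t := by
  classical
  by_contra hfail
  push_neg at hfail
  obtain ⟨x₀, hx₀, y₀, hy₀, hxy⟩ := hin
  have hgM1 := (hgcσ M).1
  have hgM2 := (hgcσ M).2
  have hefM := σ.e_lt_f M
  have haeM := σ.a_le_e M
  have hfbM := σ.f_le_b M
  have hy₀gap : y₀ ∈ Set.Ioo (σ.e M) (σ.f M) := by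
    by_contra hc
    exact hfail x₀ hx₀ y₀ (by rw [σ.level_succ M]; exact ⟨hy₀, hc⟩) hxy
  have h1 : ∀ x ∈ s.level N, x ∉ Set.Icc (t - σ.b M) (t - σ.f M) := by
    intro x hx hmem
    refine hfail x hx (t - x) ?_ (by ring)
    rw [σ.level_succ M]
    refine ⟨σ.icc_subset M ⟨?_, ?_⟩, ?_⟩
    · linarith [hmem.2]
    · linarith [hmem.1]
    · rintro ⟨_, hc2⟩; linarith [hmem.2]
  have h2 : ∀ x ∈ s.level N, x ∉ Set.Icc (t - σ.e M) (t - σ.a M) := by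
    intro x hx hmem
    refine hfail x hx (t - x) ?_ (by ring)
    rw [σ.level_succ M]
    refine ⟨σ.icc_subset M ⟨?_, ?_⟩, ?_⟩
    · linarith [hmem.2]
    · linarith [hmem.1]
    · rintro ⟨hc1, _⟩; linarith [hmem.1]
  have h3 : ∃ x ∈ s.level N, x ∈ Set.Ioo (t - σ.f M) (t - σ.e M) := by
    refine ⟨x₀, hx₀, by linarith [hy₀gap.2], by linarith [hy₀gap.1]⟩
  have hβγ : (t - σ.f M) < (t - σ.e M) := by linarith
  have hLs : (t - σ.e M) - (t - σ.f M) < lam * ((t - σ.f M) - (t - σ.b M)) := by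
    rw [show (t - σ.e M) - (t - σ.f M) = σ.f M - σ.e M from by ring,
      show (t - σ.f M) - (t - σ.b M) = σ.b M - σ.f M from by ring]
    exact hgM2
  have hRs : (t - σ.e M) - (t - σ.f M) < lam * ((t - σ.a M) - (t - σ.e M)) := by
    rw [show (t - σ.e M) - (t - σ.f M) = σ.f M - σ.e M from by ring,
      show (t - σ.a M) - (t - σ.e M) = σ.e M - σ.a M from by ring]
    exact hgM1
  have hhulls : (t - σ.e M) - (t - σ.f M) ≤ lam * (sSup CK - sInf CK) := by
    rw [show (t - σ.e M) - (t - σ.f M) = σ.f M - σ.e M from by ring]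
    exact hsize
  have hbf : σ.f M < σ.b M := by nlinarith
  have hae : σ.a M < σ.e M := by nlinarith
  have exP : PtR s N (t - σ.f M) (t - σ.e M) N :=
    s.ptR_N N (t - σ.b M) _ _ (t - σ.a M) h1 h2 h3 (by linarith) (by linarith)
  have h1m : ∀ x ∈ (s.mirror).level N, x ∉ Set.Icc (-(t - σ.a M)) (-(t - σ.e M)) := by
    intro x hx hmem
    rw [mirror_level, Set.mem_neg] at hx
    exact h2 (-x) hx ⟨by linarith [hmem.2], by linarith [hmem.1]⟩
  have h2m : ∀ x ∈ (s.mirror).level N, x ∉ Set.Icc (-(t - σ.f M)) (-(t - σ.b M)) := by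
    intro x hx hmem
    rw [mirror_level, Set.mem_neg] at hx
    exact h1 (-x) hx ⟨by linarith [hmem.2], by linarith [hmem.1]⟩
  have h3m : ∃ x ∈ (s.mirror).level N, x ∈ Set.Ioo (-(t - σ.e M)) (-(t - σ.f M)) := by
    obtain ⟨x, hx, hx2⟩ := h3
    refine ⟨-x, ?_, by linarith [hx2.2], by linarith [hx2.1]⟩
    rw [mirror_level, Set.mem_neg, neg_neg]
    exact hx
  have exPm : PtR (s.mirror) N (-(t - σ.e M)) (-(t - σ.f M)) N :=
    (s.mirror).ptR_N N (-(t - σ.a M)) _ _ (-(t - σ.b M)) h1m h2m h3m (by linarith) (by linarith)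
  have exP'N : PtL s N (t - σ.f M) (t - σ.e M) N := (s.ptR_mirror_iff N _ _ N).mp exPm
  have exPe : ∃ m, PtR s N (t - σ.f M) (t - σ.e M) m := ⟨N, exP⟩
  have exP'e : ∃ m, PtL s N (t - σ.f M) (t - σ.e M) m := ⟨N, exP'N⟩
  have hk1 : Nat.find exPe < Nat.find exP'e :=
    s.sideA hlam0 hlam1 hgcs N (t - σ.b M) (t - σ.f M) (t - σ.e M) (t - σ.a M)
      h1 h2 h3 hβγ hLs hRs hhulls (Nat.find exPe) (Nat.find exP'e)
      (Nat.find_spec exPe) (fun k hk => Nat.find_min exPe hk)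
      (Nat.find_spec exP'e) (Nat.find_min' exPe exP)
  have hgcm : ∀ n, (s.mirror).f n - (s.mirror).e n < lam * ((s.mirror).e n - (s.mirror).a n) ∧
      (s.mirror).f n - (s.mirror).e n < lam * ((s.mirror).b n - (s.mirror).f n) := by
    intro n
    rw [mirror_e, mirror_f, mirror_a, mirror_b]
    constructor
    · rw [show -(s.e n) - -(s.f n) = s.f n - s.e n from by ring,
        show -(s.f n) - -(s.b n) = s.b n - s.f n from by ring]
      exact (hgcs n).2
    · rw [show -(s.e n) - -(s.f n) = s.f n - s.e n from by ring,
        show -(s.a n) - -(s.e n) = s.e n - s.a n from by ring]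
      exact (hgcs n).1
  have hβγm : (-(t - σ.e M)) < (-(t - σ.f M)) := by linarith
  have hLm : (-(t - σ.f M)) - (-(t - σ.e M)) < lam * ((-(t - σ.e M)) - (-(t - σ.a M))) := by
    rw [show (-(t - σ.f M)) - (-(t - σ.e M)) = σ.f M - σ.e M from by ring,
      show (-(t - σ.e M)) - (-(t - σ.a M)) = σ.e M - σ.a M from by ring]
    exact hgM1
  have hRm : (-(t - σ.f M)) - (-(t - σ.e M)) < lam * ((-(t - σ.b M)) - (-(t - σ.f M))) := by
    rw [show (-(t - σ.f M)) - (-(t - σ.e M)) = σ.f M - σ.e M from by ring,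
      show (-(t - σ.b M)) - (-(t - σ.f M)) = σ.b M - σ.f M from by ring]
    exact hgM2
  have hhullm : (-(t - σ.f M)) - (-(t - σ.e M)) ≤ lam * (sSup (-CK) - sInf (-CK)) := by
    rw [show (-(t - σ.f M)) - (-(t - σ.e M)) = σ.f M - σ.e M from by ring,
      sSup_neg_set, sInf_neg_set,
      show -sInf CK - -sSup CK = sSup CK - sInf CK from by ring]
    exact hsize
  have exQe : ∃ m, PtR (s.mirror) N (-(t - σ.e M)) (-(t - σ.f M)) m :=
    exP'e.imp (fun m hm => (s.ptR_mirror_iff N _ _ m).mpr hm)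
  have exQ'e : ∃ m, PtL (s.mirror) N (-(t - σ.e M)) (-(t - σ.f M)) m :=
    exPe.imp (fun m hm => (s.ptL_mirror_iff N _ _ m).mpr hm)
  have hfq : Nat.find exQe = Nat.find exP'e :=
    le_antisymm (Nat.find_min' _ ((s.ptR_mirror_iff N _ _ _).mpr (Nat.find_spec exP'e)))
      (Nat.find_min' _ ((s.ptR_mirror_iff N _ _ _).mp (Nat.find_spec exQe)))
  have hfq' : Nat.find exQ'e = Nat.find exPe :=
    le_antisymm (Nat.find_min' _ ((s.ptL_mirror_iff N _ _ _).mpr (Nat.find_spec exPe)))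
      (Nat.find_min' _ ((s.ptL_mirror_iff N _ _ _).mp (Nat.find_spec exQ'e)))
  have hk2 : Nat.find exQe < Nat.find exQ'e :=
    (s.mirror).sideA hlam0 hlam1 hgcm N (-(t - σ.a M)) (-(t - σ.e M)) (-(t - σ.f M)) (-(t - σ.b M))
      h1m h2m h3m hβγm hLm hRm hhullm (Nat.find exQe) (Nat.find exQ'e)
      (Nat.find_spec exQe) (fun k hk => Nat.find_min exQe hk)
      (Nat.find_spec exQ'e) (Nat.find_min' exQe exPm)
  omega

lemma SlowSubdivision.isHole_gap {C : Set ℝ} (s : SlowSubdivision C) (M : ℕ) :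
    IsHole C (Set.Ioo (s.e M) (s.f M)) := by
  have hef := s.e_lt_f M
  have hdisj : Set.Ioo (s.e M) (s.f M) ⊆ Cᶜ := by
    intro x hx hxC
    exact s.gap_notMem_level (Nat.lt_succ_self M) hx (s.C_subset_level (M+1) hxC)
  have hmid : (s.e M + s.f M)/2 ∈ Set.Ioo (s.e M) (s.f M) := ⟨by linarith, by linarith⟩
  constructor
  · refine ⟨(s.e M + s.f M)/2, hmid, ?_⟩
    apply Set.Subset.antisymm
    · intro y hy
      have hpc := isPreconnected_connectedComponentIn (F := Cᶜ) (x := (s.e M + s.f M)/2)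
      have hoc := hpc.ordConnected
      have hsub := connectedComponentIn_subset Cᶜ ((s.e M + s.f M)/2)
      have hmidc : (s.e M + s.f M)/2 ∈ connectedComponentIn Cᶜ ((s.e M + s.f M)/2) :=
        mem_connectedComponentIn (hdisj hmid)
      constructor
      · by_contra hc; push_neg at hc
        have hmem : s.e M ∈ connectedComponentIn Cᶜ ((s.e M + s.f M)/2) :=
          hoc.out hy hmidc ⟨hc, by linarith⟩
        exact hsub hmem (s.e_mem_C M)
      · by_contra hc; push_neg at hc
        have hmem : s.f M ∈ connectedComponentIn Cᶜ ((s.e M + s.f M)/2) :=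
          hoc.out hmidc hy ⟨by linarith, hc⟩
        exact hsub hmem (s.f_mem_C M)
    · exact isPreconnected_Ioo.subset_connectedComponentIn hmid hdisj
  · exact fun x hx => s.level_subset_Icc M (s.icc_subset M (s.gap_subset M hx))

/-- **Hall's theorem on sums of Cantor sets.** If the Cantor sets `𝕂` and `𝔽` each
satisfy the `ε`-stable gap condition and jointly the `ε`-size condition, then
`𝕂 + 𝔽 = [min 𝕂 + min 𝔽, max 𝕂 + max 𝔽]`. -/
theorem hall_sum_of_cantor_sets (ε : ℝ) (hε : 0 < ε) (K F : Set ℝ)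
    (hK : IsCantorSet K) (hF : IsCantorSet F)
    (hKgap : HasStableGap ε K) (hFgap : HasStableGap ε F)
    (hsize : SizeCond ε K F) :
    Set.image2 (fun x y => x + y) K F = Set.Icc (sInf K + sInf F) (sSup K + sSup F) := by
  classical
  obtain ⟨hKne, hKcpt, -, -⟩ := hK
  obtain ⟨hFne, hFcpt, -, -⟩ := hF
  obtain ⟨sK, hgcK⟩ := hKgap
  obtain ⟨sF, hgcF⟩ := hFgap
  have hgcK' : ∀ n, sK.f n - sK.e n < (1-ε) * (sK.e n - sK.a n) ∧
      sK.f n - sK.e n < (1-ε) * (sK.b n - sK.f n) := hgcK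
  have hgcF' : ∀ n, sF.f n - sF.e n < (1-ε) * (sF.e n - sF.a n) ∧
      sF.f n - sF.e n < (1-ε) * (sF.b n - sF.f n) := hgcF
  have hlam1 : (1-ε) < 1 := by linarith
  have hlam0 : 0 < (1-ε) := by
    by_contra hc; push_neg at hc
    have h1 := (hgcK' 0).1
    have h2 := sK.e_lt_f 0
    have h3 := sK.a_le_e 0
    nlinarith
  have hKinfmem : sInf K ∈ K := hKcpt.sInf_mem hKne
  have hKsupmem : sSup K ∈ K := hKcpt.sSup_mem hKne
  have hFinfmem : sInf F ∈ F := hFcpt.sInf_mem hFne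
  have hFsupmem : sSup F ∈ F := hFcpt.sSup_mem hFne
  apply Set.Subset.antisymm
  · intro z hz
    rw [Set.mem_image2] at hz
    obtain ⟨x, hx, y, hy, hxy⟩ := hz
    rw [← hxy]
    show x + y ∈ Set.Icc (sInf K + sInf F) (sSup K + sSup F)
    exact ⟨add_le_add (csInf_le hKcpt.bddBelow hx) (csInf_le hFcpt.bddBelow hy),
      add_le_add (le_csSup hKcpt.bddAbove hx) (le_csSup hFcpt.bddAbove hy)⟩
  · intro t ht
    have hsizeK : ∀ m, sK.f m - sK.e m ≤ (1-ε) * (sSup F - sInf F) := by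
      intro m
      have h := hsize.1 _ (sK.isHole_gap m)
      rwa [csSup_Ioo (sK.e_lt_f m), csInf_Ioo (sK.e_lt_f m)] at h
    have hsizeF : ∀ m, sF.f m - sF.e m ≤ (1-ε) * (sSup K - sInf K) := by
      intro m
      have h := hsize.2 _ (sF.isHole_gap m)
      rwa [csSup_Ioo (sF.e_lt_f m), csInf_Ioo (sF.e_lt_f m)] at h
    have hP : ∀ n, ∃ x ∈ sK.level n, ∃ y ∈ sF.level n, x + y = t := by
      intro n
      induction n with
      | zero =>
        refine ⟨max (sInf K) (t - sSup F), ?_, min (t - sInf K) (sSup F), ?_, ?_⟩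
        · rw [sK.level_zero]
          refine ⟨le_max_left _ _, max_le (le_csSup hKcpt.bddAbove hKinfmem) ?_⟩
          linarith [ht.2]
        · rw [sF.level_zero]
          refine ⟨le_min ?_ (csInf_le hFcpt.bddBelow hFsupmem), min_le_right _ _⟩
          linarith [ht.1]
        · rcases le_total (sInf K) (t - sSup F) with h | h
          · rw [max_eq_right h, min_eq_right (by linarith)]
            ring
          · rw [max_eq_left h, min_eq_left (by linarith)]
            ring
      | succ n ih =>
        have step1 : ∃ y ∈ sF.level n, ∃ x ∈ sK.level (n+1), y + x = t := by
          apply sum_step sF sK hlam0 hlam1 hgcF' hgcK' n n t (hsizeK n)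
          obtain ⟨x, hx, y, hy, hxy⟩ := ih
          exact ⟨y, hy, x, hx, by linarith⟩
        apply sum_step sK sF hlam0 hlam1 hgcK' hgcF' (n+1) n t (hsizeF n)
        obtain ⟨y, hy, x, hx, hxy⟩ := step1
        exact ⟨x, hx, y, hy, by linarith⟩
    set T : ℕ → Set ℝ := fun n => sK.level n ∩ (fun x => t - x) ⁻¹' (sF.level n) with hT
    have hTsub : ∀ n, T (n+1) ⊆ T n := fun n x hx =>
      ⟨sK.subset_succ n hx.1, sF.subset_succ n hx.2⟩
    have hTne : ∀ n, (T n).Nonempty := by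
      intro n
      obtain ⟨x, hx, y, hy, hxy⟩ := hP n
      refine ⟨x, hx, ?_⟩
      show t - x ∈ sF.level n
      rw [show t - x = y from by linarith]
      exact hy
    have hTcl : ∀ n, IsClosed (T n) := fun n =>
      (sK.isClosed_level n).inter ((sF.isClosed_level n).preimage (continuous_const.sub continuous_id))
    have hT0 : IsCompact (T 0) :=
      (sK.isCompact_level 0).of_isClosed_subset (hTcl 0) Set.inter_subset_left
    obtain ⟨x, hx⟩ :=
      IsCompact.nonempty_iInter_of_sequence_nonempty_isCompact_isClosed T hTsub hTne hT0 hTcl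
    rw [Set.mem_iInter] at hx
    have hxK : x ∈ K := sK.mem_C_of_mem_levels (fun n => (hx n).1)
    have hxF : t - x ∈ F := sF.mem_C_of_mem_levels (fun n => (hx n).2)
    rw [Set.mem_image2]
    refine ⟨x, hxK, t - x, hxF, ?_⟩
    show x + (t - x) = t
    ring
end
end

section
/- Let ε > 0, let U ⊆ ℝ², and let S : U → ℝ be a function such that S − S₀ is Lipschitz on U with (1 − Lip(S−S₀))/(1 + Lip(S−S₀)) > 1 − ε. Let K = [a,b] and F = [c,d] be compact intervals with K × F ⊆ U. (i) If B = (e,f) with a < e < f < b is a nonempty open subinterval of K satisfying |B| < (1−ε)·|F|, then S(K × F) = S(K^L × F) ∪ S(K^R × F), where K^L = [a,e] and K^R = [f,b]. (ii) Symmetrically, if C = (e',f') with c < e' < f' < d is a nonempty open subinterval of F satisfying |C| < (1−ε)·|K|, then S(K × F) = S(K × F^L) ∪ S(K × F^R), where F^L = [c,e'] and F^R = [f',d]. -/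
lemma splitting_helper (ε L : ℝ) (hL : 0 ≤ L) (U : Set (ℝ × ℝ)) (S : ℝ × ℝ → ℝ)
    (hLip : ∀ p ∈ U, ∀ q ∈ U,
      |(S p - (p.1 + p.2)) - (S q - (q.1 + q.2))| ≤ L * dist p q)
    (hcond : 1 - ε < (1 - L) / (1 + L))
    (a b c d : ℝ) (hab : a ≤ b) (hcd : c ≤ d)
    (hsub : Set.Icc a b ×ˢ Set.Icc c d ⊆ U)
    (e f : ℝ) (hae : a < e) (hef : e < f) (hfb : f < b)
    (hB : f - e < (1 - ε) * (d - c)) :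
    S '' (Set.Icc a b ×ˢ Set.Icc c d) =
      S '' (Set.Icc a e ×ˢ Set.Icc c d) ∪ S '' (Set.Icc f b ×ˢ Set.Icc c d) := by
  have h1L : (0:ℝ) < 1 + L := by linarith
  have hfe : 0 < f - e := by linarith
  have hεpos : 0 < (1 - ε) * (d - c) := lt_trans hfe hB
  have hε1 : 0 < 1 - ε := by
    rcases lt_or_ge 0 (1 - ε) with h | h
    · exact h
    · nlinarith [sub_nonneg.mpr hcd]
  have hdc : 0 < d - c := by nlinarith
  have hL1 : L < 1 := by
    by_contra h
    push_neg at h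
    have : (1 - L) / (1 + L) ≤ 0 := div_nonpos_of_nonpos_of_nonneg (by linarith) (by linarith)
    linarith
  have hkey : (1 + L) * (f - e) ≤ (1 - L) * (d - c) := by
    have h2 : f - e < (1 - L) / (1 + L) * (d - c) :=
      lt_of_lt_of_le hB (le_of_lt (mul_lt_mul_of_pos_right hcond hdc))
    rw [div_mul_eq_mul_div, lt_div_iff₀ h1L] at h2
    nlinarith [h2]
  -- monotonicity
  have mono : ∀ p ∈ Set.Icc a b ×ˢ Set.Icc c d, ∀ q ∈ Set.Icc a b ×ˢ Set.Icc c d,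
      p.1 ≤ q.1 → p.2 ≤ q.2 → S p ≤ S q := by
    intro p hp q hq h1 h2
    have hd : dist p q ≤ (q.1 - p.1) + (q.2 - p.2) := by
      rw [Prod.dist_eq]
      apply max_le
      · rw [Real.dist_eq, abs_of_nonpos (by linarith)]; linarith
      · rw [Real.dist_eq, abs_of_nonpos (by linarith)]; linarith
    have h := (abs_le.mp (hLip p (hsub hp) q (hsub hq))).2
    have h3 : L * dist p q ≤ L * ((q.1 - p.1) + (q.2 - p.2)) :=
      mul_le_mul_of_nonneg_left hd hL
    have h4 : L * ((q.1 - p.1) + (q.2 - p.2)) ≤ 1 * ((q.1 - p.1) + (q.2 - p.2)) :=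
      mul_le_mul_of_nonneg_right (le_of_lt hL1) (by linarith)
    linarith
  -- continuity
  have hSlip : LipschitzOnWith (Real.toNNReal (L + 2)) S U := by
    rw [lipschitzOnWith_iff_dist_le_mul]
    intro x hx y hy
    have h := hLip x hx y hy
    have h1 : |x.1 - y.1| ≤ dist x y := by
      rw [Prod.dist_eq, Real.dist_eq]; exact le_max_left _ _
    have h2 : |x.2 - y.2| ≤ dist x y := by
      rw [Prod.dist_eq, Real.dist_eq]; exact le_max_right _ _
    have hcoe : ((Real.toNNReal (L + 2)) : ℝ) = L + 2 := Real.coe_toNNReal _ (by linarith)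
    rw [hcoe, Real.dist_eq]
    have key : S x - S y = ((S x - (x.1 + x.2)) - (S y - (y.1 + y.2))) + (x.1 - y.1) + (x.2 - y.2) := by ring
    rw [key]
    calc |((S x - (x.1 + x.2)) - (S y - (y.1 + y.2))) + (x.1 - y.1) + (x.2 - y.2)|
        ≤ |(S x - (x.1 + x.2)) - (S y - (y.1 + y.2))| + |x.1 - y.1| + |x.2 - y.2| :=
          abs_add_three _ _ _
      _ ≤ L * dist x y + dist x y + dist x y := by gcongr
      _ = (L + 2) * dist x y := by ring
  have hsubL : Set.Icc a e ×ˢ Set.Icc c d ⊆ Set.Icc a b ×ˢ Set.Icc c d :=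
    Set.prod_mono (Set.Icc_subset_Icc le_rfl (by linarith)) subset_rfl
  have hsubR : Set.Icc f b ×ˢ Set.Icc c d ⊆ Set.Icc a b ×ˢ Set.Icc c d :=
    Set.prod_mono (Set.Icc_subset_Icc (by linarith) le_rfl) subset_rfl
  have hconnL : IsPreconnected (S '' (Set.Icc a e ×ˢ Set.Icc c d)) :=
    IsPreconnected.image ((convex_Icc a e).prod (convex_Icc c d)).isPreconnected _
      ((hSlip.continuousOn).mono (hsubL.trans hsub))
  have hconnR : IsPreconnected (S '' (Set.Icc f b ×ˢ Set.Icc c d)) :=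
    IsPreconnected.image ((convex_Icc f b).prod (convex_Icc c d)).isPreconnected _
      ((hSlip.continuousOn).mono (hsubR.trans hsub))
  have memac : ((a, c) : ℝ × ℝ) ∈ Set.Icc a e ×ˢ Set.Icc c d :=
    ⟨Set.mem_Icc.mpr ⟨le_rfl, hae.le⟩, Set.mem_Icc.mpr ⟨le_rfl, hcd⟩⟩
  have memed : ((e, d) : ℝ × ℝ) ∈ Set.Icc a e ×ˢ Set.Icc c d :=
    ⟨Set.mem_Icc.mpr ⟨hae.le, le_rfl⟩, Set.mem_Icc.mpr ⟨hcd, le_rfl⟩⟩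
  have memfc : ((f, c) : ℝ × ℝ) ∈ Set.Icc f b ×ˢ Set.Icc c d :=
    ⟨Set.mem_Icc.mpr ⟨le_rfl, hfb.le⟩, Set.mem_Icc.mpr ⟨le_rfl, hcd⟩⟩
  have membd : ((b, d) : ℝ × ℝ) ∈ Set.Icc f b ×ˢ Set.Icc c d :=
    ⟨Set.mem_Icc.mpr ⟨hfb.le, le_rfl⟩, Set.mem_Icc.mpr ⟨hcd, le_rfl⟩⟩
  -- overlap
  have hov : S (f, c) ≤ S (e, d) := by
    have hmemed : ((e, d) : ℝ × ℝ) ∈ Set.Icc a b ×ˢ Set.Icc c d := hsubL memed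
    have hmemfc : ((f, c) : ℝ × ℝ) ∈ Set.Icc a b ×ˢ Set.Icc c d := hsubR memfc
    have h := (abs_le.mp (hLip (e, d) (hsub hmemed) (f, c) (hsub hmemfc))).1
    have hdist : dist ((e, d) : ℝ × ℝ) ((f, c) : ℝ × ℝ) ≤ d - c := by
      rw [Prod.dist_eq]
      apply max_le
      · rw [Real.dist_eq, abs_of_nonpos (by linarith)]
        nlinarith [mul_nonneg hL hfe.le, mul_nonneg hL hdc.le]
      · rw [Real.dist_eq, abs_of_nonneg (by linarith)]
    have h2 : L * dist ((e, d) : ℝ × ℝ) ((f, c) : ℝ × ℝ) ≤ L * (d - c) :=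
      mul_le_mul_of_nonneg_left hdist hL
    simp only [] at h
    nlinarith [h, h2, hkey, mul_nonneg hL hfe.le]
  apply Set.Subset.antisymm
  · rintro y ⟨p, hp, rfl⟩
    have hm : S (a, c) ≤ S p :=
      mono (a, c) (hsubL memac) p hp hp.1.1 hp.2.1
    have hM : S p ≤ S (b, d) :=
      mono p hp (b, d) (hsubR membd) hp.1.2 hp.2.2
    rcases le_or_gt (S p) (S (e, d)) with hc | hc
    · exact Or.inl (hconnL.Icc_subset ⟨(a, c), memac, rfl⟩ ⟨(e, d), memed, rfl⟩ ⟨hm, hc⟩)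
    · exact Or.inr (hconnR.Icc_subset ⟨(f, c), memfc, rfl⟩ ⟨(b, d), membd, rfl⟩
        ⟨le_trans hov hc.le, hM⟩)
  · exact Set.union_subset (Set.image_mono hsubL) (Set.image_mono hsubR)


/-- **Key splitting lemma for the Stable Hall theorem.** Suppose `S − S₀` is Lipschitz
on `U` with constant `L` satisfying `(1 − L)/(1 + L) > 1 − ε`, and let `K = [a,b]`,
`F = [c,d]` be compact intervals with `K × F ⊆ U`. (i) If `B = (e,f) ⊂ K` is a
nonempty open subinterval with `|B| < (1−ε)|F|`, then
`S(K × F) = S(K^L × F) ∪ S(K^R × F)`. (ii) Symmetrically in the second coordinate. -/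
theorem splitting_lemma (ε : ℝ) (hε : 0 < ε) (U : Set (ℝ × ℝ)) (S : ℝ × ℝ → ℝ)
    (L : ℝ) (hL : 0 ≤ L)
    (hLip : ∀ p ∈ U, ∀ q ∈ U,
      |(S p - (p.1 + p.2)) - (S q - (q.1 + q.2))| ≤ L * dist p q)
    (hcond : 1 - ε < (1 - L) / (1 + L))
    (a b c d : ℝ) (hab : a ≤ b) (hcd : c ≤ d)
    (hsub : Set.Icc a b ×ˢ Set.Icc c d ⊆ U) :
    (∀ e f : ℝ, a < e → e < f → f < b → f - e < (1 - ε) * (d - c) →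
      S '' (Set.Icc a b ×ˢ Set.Icc c d) =
        S '' (Set.Icc a e ×ˢ Set.Icc c d) ∪ S '' (Set.Icc f b ×ˢ Set.Icc c d)) ∧
    (∀ e f : ℝ, c < e → e < f → f < d → f - e < (1 - ε) * (b - a) →
      S '' (Set.Icc a b ×ˢ Set.Icc c d) =
        S '' (Set.Icc a b ×ˢ Set.Icc c e) ∪ S '' (Set.Icc a b ×ˢ Set.Icc f d)) := by

  constructor
  · intro e f h1 h2 h3 h4
    exact splitting_helper ε L hL U S hLip hcond a b c d hab hcd hsub e f h1 h2 h3 h4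
  · intro e f h1 h2 h3 h4
    set S' : ℝ × ℝ → ℝ := fun p => S p.swap with hS'
    have hswapd : ∀ p q : ℝ × ℝ, dist (Prod.swap p) (Prod.swap q) = dist p q := by
      intro p q
      rw [Prod.dist_eq, Prod.dist_eq]
      exact max_comm _ _
    have hLip' : ∀ p ∈ Prod.swap ⁻¹' U, ∀ q ∈ Prod.swap ⁻¹' U,
        |(S' p - (p.1 + p.2)) - (S' q - (q.1 + q.2))| ≤ L * dist p q := by
      intro p hp q hq
      have := hLip p.swap hp q.swap hq
      rw [hswapd p q] at this
      simpa [hS', Prod.swap, add_comm] using this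
    have hsub' : Set.Icc c d ×ˢ Set.Icc a b ⊆ Prod.swap ⁻¹' U := by
      intro p hp
      exact hsub ⟨hp.2, hp.1⟩
    have key := splitting_helper ε L hL (Prod.swap ⁻¹' U) S' hLip' hcond c d a b hcd hab
      hsub' e f h1 h2 h3 h4
    have himg : ∀ s t : Set ℝ, S' '' (s ×ˢ t) = S '' (t ×ˢ s) := by
      intro s t
      rw [hS', show (fun p : ℝ × ℝ => S p.swap) = S ∘ Prod.swap from rfl,
        Set.image_comp, Set.image_swap_prod]
    rw [himg, himg, himg] at key
    exact key
end

section
/- Let μ > 0, δ ≥ 0, and let s₁ be a positive integer. Let K ⊆ ℝ be a nonempty compact set with m := min K and M := max K, and assume s₁·μ ≥ M − m and M − m ≥ μ/2 + 2δ. Let D := ⋃_{s ≥ s₁} K × (K + sμ) (union over integers s ≥ s₁) and let H : D → ℝ be continuous with |H(x₁,x₂) − (x₂ − x₁)/2| ≤ δ for all (x₁,x₂) ∈ D. Assume moreover that for every integer s ≥ s₁ the image H(K × (K + sμ)) is an interval. Then for every real number L ≥ inf H(K × (K + s₁μ)) there exist x₁, x₂ ∈ K and an integer s ≥ s₁ such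 that L = H(x₁, x₂ + sμ). -/
/-- **Decomposition lemma for perturbed heights.** Let `K ⊆ ℝ` be nonempty compact with
`s₁μ ≥ max K − min K ≥ μ/2 + 2δ`, and let `H` be continuous on
`D = ⋃_{s ≥ s₁} K × (K + sμ)` with `|H(x₁,x₂) − (x₂−x₁)/2| ≤ δ` on `D` and with
`H(K × (K + sμ))` an interval for every `s ≥ s₁`. Then every real
`L ≥ inf H(K × (K + s₁μ))` can be written as `L = H(x₁, x₂ + sμ)` with `x₁, x₂ ∈ K`
and `s ≥ s₁` an integer. -/
theorem decomposition_perturbed (μ δ : ℝ) (hμ : 0 < μ) (hδ : 0 ≤ δ)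
    (s₁ : ℕ) (hs₁ : 0 < s₁)
    (K : Set ℝ) (hne : K.Nonempty) (hcomp : IsCompact K)
    (h1 : sSup K - sInf K ≤ (s₁ : ℝ) * μ)
    (h2 : μ / 2 + 2 * δ ≤ sSup K - sInf K)
    (H : ℝ × ℝ → ℝ)
    (hHcont : ContinuousOn H
      (⋃ s ∈ Set.Ici s₁, K ×ˢ ((fun x => x + (s : ℝ) * μ) '' K)))
    (hHδ : ∀ p ∈ (⋃ s ∈ Set.Ici s₁, K ×ˢ ((fun x => x + (s : ℝ) * μ) '' K)),
      |H p - (p.2 - p.1) / 2| ≤ δ)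
    (hint : ∀ s ∈ Set.Ici s₁,
      (H '' (K ×ˢ ((fun x => x + (s : ℝ) * μ) '' K))).OrdConnected)
    (L : ℝ) (hL : sInf (H '' (K ×ˢ ((fun x => x + (s₁ : ℝ) * μ) '' K))) ≤ L) :
    ∃ x₁ ∈ K, ∃ x₂ ∈ K, ∃ s : ℕ, s₁ ≤ s ∧ L = H (x₁, x₂ + (s : ℝ) * μ) := by
  classical
  set m := sInf K with hm
  set M := sSup K with hM
  have hmK : m ∈ K := hcomp.sInf_mem hne
  have hMK : M ∈ K := hcomp.sSup_mem hne
  have hmM : m ≤ M := csInf_le_csSup hne hcomp.bddBelow hcomp.bddAbove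
  set T : ℕ → Set (ℝ × ℝ) := fun s => K ×ˢ ((fun x => x + (s : ℝ) * μ) '' K) with hT
  have hTD : ∀ s, s₁ ≤ s → T s ⊆ ⋃ s ∈ Set.Ici s₁, K ×ˢ ((fun x => x + (s : ℝ) * μ) '' K) :=
    fun s hs x hx => Set.mem_biUnion hs hx
  have hTcomp : ∀ s : ℕ, IsCompact (T s) := fun s =>
    hcomp.prod (hcomp.image (continuous_add_right _))
  have hTne : ∀ s : ℕ, (T s).Nonempty := fun s =>
    ⟨(m, m + (s : ℝ) * μ), hmK, ⟨m, hmK, rfl⟩⟩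
  set J : ℕ → Set ℝ := fun s => H '' T s with hJ
  have hJcomp : ∀ s, s₁ ≤ s → IsCompact (J s) := fun s hs =>
    (hTcomp s).image_of_continuousOn (hHcont.mono (hTD s hs))
  have hJne : ∀ s, (J s).Nonempty := fun s => (hTne s).image H
  set a : ℕ → ℝ := fun s => sInf (J s) with ha
  set b : ℕ → ℝ := fun s => sSup (J s) with hb
  have haJ : ∀ s, s₁ ≤ s → a s ∈ J s := fun s hs => (hJcomp s hs).sInf_mem (hJne s)
  have hbJ : ∀ s, s₁ ≤ s → b s ∈ J s := fun s hs => (hJcomp s hs).sSup_mem (hJne s)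
  -- upper bound witness: H (m, M + sμ) is large
  have hub : ∀ s, s₁ ≤ s → (M + (s : ℝ) * μ - m) / 2 - δ ≤ b s := by
    intro s hs
    have hp : (m, M + (s : ℝ) * μ) ∈ T s := ⟨hmK, M, hMK, rfl⟩
    have h := abs_le.mp (hHδ (m, M + (s : ℝ) * μ) (hTD s hs hp))
    have h1' : (M + (s : ℝ) * μ - m) / 2 - δ ≤ H (m, M + (s : ℝ) * μ) := by
      simp only at h; linarith [h.1]
    exact h1'.trans (le_csSup (hJcomp s hs).bddAbove ⟨_, hp, rfl⟩)
  -- lower bound witness: H (M, m + sμ) is small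
  have hlb : ∀ s, s₁ ≤ s → a s ≤ (m + (s : ℝ) * μ - M) / 2 + δ := by
    intro s hs
    have hp : (M, m + (s : ℝ) * μ) ∈ T s := ⟨hMK, m, hmK, rfl⟩
    have h := abs_le.mp (hHδ (M, m + (s : ℝ) * μ) (hTD s hs hp))
    have h1' : H (M, m + (s : ℝ) * μ) ≤ (m + (s : ℝ) * μ - M) / 2 + δ := by
      simp only at h; linarith [h.2]
    exact (csInf_le (hJcomp s hs).bddBelow ⟨_, hp, rfl⟩).trans h1'
  -- consecutive intervals overlap
  have hover : ∀ s, s₁ ≤ s → a (s + 1) ≤ b s := by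
    intro s hs
    have h1' := hlb (s + 1) (hs.trans (Nat.le_succ s))
    have h2' := hub s hs
    have : ((s + 1 : ℕ) : ℝ) = (s : ℝ) + 1 := by push_cast; ring
    rw [this] at h1'
    linarith
  -- there is some s with L ≤ b s
  have hex : ∃ s, s₁ ≤ s ∧ L ≤ b s := by
    obtain ⟨n, hn⟩ := exists_nat_ge ((2 * L + 2 * δ + m - M) / μ)
    refine ⟨max s₁ n, le_max_left _ _, ?_⟩
    have hnle : (n : ℝ) ≤ ((max s₁ n : ℕ) : ℝ) := by exact_mod_cast le_max_right s₁ n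
    have : (2 * L + 2 * δ + m - M) ≤ ((max s₁ n : ℕ) : ℝ) * μ := by
      calc 2 * L + 2 * δ + m - M ≤ (n : ℝ) * μ := by
            rw [div_le_iff₀ hμ] at hn; linarith
        _ ≤ _ := by nlinarith
    have := hub (max s₁ n) (le_max_left _ _)
    linarith
  set s := Nat.find hex with hsdef
  obtain ⟨hss₁, hLb⟩ := Nat.find_spec hex
  have haL : a s ≤ L := by
    rcases eq_or_lt_of_le hss₁ with heq | hlt
    · have h' : a s₁ ≤ L := hL
      rwa [heq] at h'
    · have hpred : s - 1 + 1 = s := by omega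
      have hmin := Nat.find_min hex (show s - 1 < s by omega)
      push_neg at hmin
      have hbp : b (s - 1) < L := hmin (by omega)
      have := hover (s - 1) (by omega)
      rw [hpred] at this
      linarith
  have hLJ : L ∈ J s := (hint s hss₁).out (haJ s hss₁) (hbJ s hss₁) ⟨haL, hLb⟩
  obtain ⟨⟨q1, q2⟩, hp, hpe⟩ := hLJ
  obtain ⟨hp1, x₂, hx₂, hx₂e⟩ := hp
  refine ⟨q1, hp1, x₂, hx₂, s, hss₁, ?_⟩
  rw [← hpe]
  simp only at hx₂e
  rw [hx₂e]
end
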